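/- arXiv:1105.3884 — 4 statements merged into one kernel-verified Lean document; each statement's English description precedes it below -/
import Mathlib

section
/- Let (X, M, *) be a compact fuzzy metric space with the Łukasiewicz t-norm. If a sequence (μᵢ) in P(X) converges weakly* to μ ∈ P(X), then (μᵢ) converges to μ in the topology induced by the fuzzy Prokhorov metric M̂. Consequently, the topology induced by M̂ on P(X) coincides with the weak* topology. -/
open Set MeasureTheory Filter Topology
open scoped ENNReal NNReal

noncomputable section

/-- The Łukasiewicz t-norm. -/
def luk (a b : ℝ) : ℝ := max (a + b - 1) 0

/-- A continuous t-norm on `[0,1]`. -/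
structure IsContinuousTNorm (star : ℝ → ℝ → ℝ) : Prop where
  maps_to : ∀ a b, a ∈ Icc (0:ℝ) 1 → b ∈ Icc (0:ℝ) 1 → star a b ∈ Icc (0:ℝ) 1
  comm : ∀ a b, a ∈ Icc (0:ℝ) 1 → b ∈ Icc (0:ℝ) 1 → star a b = star b a
  assoc : ∀ a b c, a ∈ Icc (0:ℝ) 1 → b ∈ Icc (0:ℝ) 1 → c ∈ Icc (0:ℝ) 1 →
    star (star a b) c = star a (star b c)
  continuous : ContinuousOn (fun p : ℝ × ℝ => star p.1 p.2) (Icc 0 1 ×ˢ Icc 0 1)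
  one_right : ∀ a, a ∈ Icc (0:ℝ) 1 → star a 1 = a
  mono : ∀ a b c d, a ∈ Icc (0:ℝ) 1 → b ∈ Icc (0:ℝ) 1 → c ∈ Icc (0:ℝ) 1 →
    d ∈ Icc (0:ℝ) 1 → a ≤ c → b ≤ d → star a b ≤ star c d

/-- A fuzzy metric (George–Veeramani) with respect to a t-norm `star`. -/
structure IsFuzzyMetric {X : Type*} (M : X → X → ℝ → ℝ) (star : ℝ → ℝ → ℝ) : Prop where
  pos : ∀ x y t, 0 < t → 0 < M x y t
  le_one : ∀ x y t, 0 < t → M x y t ≤ 1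
  eq_one_iff : ∀ x y t, 0 < t → (M x y t = 1 ↔ x = y)
  symm : ∀ x y t, 0 < t → M x y t = M y x t
  triangle : ∀ x y z t s, 0 < t → 0 < s → star (M x y t) (M y z s) ≤ M x z (t + s)
  continuousOn : ∀ x y, ContinuousOn (fun t => M x y t) (Ioi (0:ℝ))

/-- The open ball `B(x,r,t)` in a fuzzy metric space. -/
def fmBall {X : Type*} (M : X → X → ℝ → ℝ) (x : X) (r t : ℝ) : Set X :=
  {y | 1 - r < M x y t}

/-- The `r,t`-expansion `A^{r,t}` of a set `A`. -/
def fmExpand {X : Type*} (M : X → X → ℝ → ℝ) (A : Set X) (r t : ℝ) : Set X :=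
  ⋃ x ∈ A, fmBall M x r t

/-- The fuzzy metric `M` generates the given topology on `X`. -/
def GeneratesTopology {X : Type*} [TopologicalSpace X] (M : X → X → ℝ → ℝ) : Prop :=
  TopologicalSpace.IsTopologicalBasis
    {s : Set X | ∃ x r t, 0 < r ∧ r < 1 ∧ 0 < t ∧ s = fmBall M x r t}

/-- The set of admissible radii in the definition of the fuzzy Prokhorov metric. -/
def prokSet {X : Type*} [MeasurableSpace X] (M : X → X → ℝ → ℝ)
    (μ ν : Measure X) (t : ℝ) : Set ℝ :=
  {r | 0 < r ∧ r < 1 ∧ ∀ A : Set X, MeasurableSet A →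
    μ A ≤ ν (fmExpand M A r t) + ENNReal.ofReal r ∧
    ν A ≤ μ (fmExpand M A r t) + ENNReal.ofReal r}

/-- The fuzzy Prokhorov function `M̂` on measures. -/
def fuzzyProkhorov {X : Type*} [MeasurableSpace X] (M : X → X → ℝ → ℝ)
    (μ ν : Measure X) (t : ℝ) : ℝ :=
  1 - sInf (prokSet M μ ν t)


set_option linter.unusedSectionVars false
set_option linter.unusedVariables false
set_option linter.unusedTactic false
set_option maxHeartbeats 1000000


namespace FPaux
variable {X : Type*} {M : X → X → ℝ → ℝ}

lemma self_lt (hM : IsFuzzyMetric M luk) {x : X} {r t : ℝ} (hr : 0 < r) (ht : 0 < t) :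
    x ∈ fmBall M x r t := by
  have h := (hM.eq_one_iff x x t ht).mpr rfl
  simp only [fmBall, mem_setOf_eq, h]; linarith

lemma tri (hM : IsFuzzyMetric M luk) (x y z : X) {t s : ℝ} (ht : 0 < t) (hs : 0 < s) :
    M x y t + M y z s - 1 ≤ M x z (t + s) :=
  le_trans (le_max_left _ _) (hM.triangle x y z t s ht hs)

lemma mono_t (hM : IsFuzzyMetric M luk) (x y : X) {s t : ℝ} (hs : 0 < s) (hst : s ≤ t) :
    M x y s ≤ M x y t := by
  rcases eq_or_lt_of_le hst with h | h
  · rw [h]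
  · have h1 : M y y (t - s) = 1 := (hM.eq_one_iff _ _ _ (by linarith)).mpr rfl
    have h2 := tri hM x y y hs (show 0 < t - s by linarith)
    rw [h1, show s + (t - s) = t by ring] at h2
    linarith

lemma ball_mono (hM : IsFuzzyMetric M luk) {x : X} {r r' t t' : ℝ} (ht : 0 < t)
    (hr : r ≤ r') (htt : t ≤ t') : fmBall M x r t ⊆ fmBall M x r' t' := by
  intro y hy
  have : M x y t ≤ M x y t' := mono_t hM x y ht htt
  simp only [fmBall, mem_setOf_eq] at *
  linarith

lemma subset_expand (hM : IsFuzzyMetric M luk) {A : Set X} {r t : ℝ} (hr : 0 < r) (ht : 0 < t) :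
    A ⊆ fmExpand M A r t := fun a ha =>
  mem_biUnion ha (self_lt hM hr ht)

lemma expand_mono (hM : IsFuzzyMetric M luk) {A : Set X} {r r' t t' : ℝ} (ht : 0 < t)
    (hr : r ≤ r') (htt : t ≤ t') : fmExpand M A r t ⊆ fmExpand M A r' t' :=
  iUnion₂_mono fun _ _ => ball_mono hM ht hr htt

lemma expand_subset_mono {A B : Set X} {r t : ℝ} (hAB : A ⊆ B) :
    fmExpand M A r t ⊆ fmExpand M B r t :=
  biUnion_subset_biUnion_left hAB

lemma expand_expand (hM : IsFuzzyMetric M luk) {A : Set X} {r ρ t τ : ℝ}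
    (ht : 0 < t) (hτ : 0 < τ) :
    fmExpand M (fmExpand M A r t) ρ τ ⊆ fmExpand M A (r + ρ) (t + τ) := by
  intro y hy
  simp only [fmExpand, mem_iUnion, exists_prop] at hy ⊢
  obtain ⟨x, hx, hxy⟩ := hy
  obtain ⟨a, ha, hax⟩ := hx
  refine ⟨a, ha, ?_⟩
  have := tri hM a x y ht hτ
  simp only [fmBall, mem_setOf_eq] at *
  linarith

variable [TopologicalSpace X]

lemma ball_open (hgen : GeneratesTopology M) {x : X} {r t : ℝ}
    (hr0 : 0 < r) (hr1 : r < 1) (ht : 0 < t) : IsOpen (fmBall M x r t) :=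
  hgen.isOpen ⟨x, r, t, hr0, hr1, ht, rfl⟩


lemma expand_open (hgen : GeneratesTopology M) {A : Set X} {r t : ℝ}
    (hr0 : 0 < r) (hr1 : r < 1) (ht : 0 < t) : IsOpen (fmExpand M A r t) :=
  isOpen_biUnion fun _ _ => ball_open hgen hr0 hr1 ht




end FPaux

set_option linter.unusedSectionVars false
set_option linter.unusedVariables false
set_option maxHeartbeats 1000000

namespace FPaux
variable {X : Type*} {M : X → X → ℝ → ℝ}

section Prok
variable [MeasurableSpace X]

lemma prokSet_bddBelow {μ ν : Measure X} {t : ℝ} : BddBelow (prokSet M μ ν t) :=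
  ⟨0, fun r hr => hr.1.le⟩

lemma prokSet_symm {μ ν : Measure X} {t : ℝ} : prokSet M μ ν t = prokSet M ν μ t := by
  ext r
  simp only [prokSet, mem_setOf_eq]
  refine and_congr_right fun _ => and_congr_right fun _ => ?_
  exact ⟨fun h A hA => ⟨(h A hA).2, (h A hA).1⟩, fun h A hA => ⟨(h A hA).2, (h A hA).1⟩⟩

lemma prokSet_mono_t (hM : IsFuzzyMetric M luk) {μ ν : Measure X} {t t' : ℝ}
    (ht : 0 < t) (htt : t ≤ t') : prokSet M μ ν t ⊆ prokSet M μ ν t' := by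
  rintro r ⟨hr0, hr1, h⟩
  refine ⟨hr0, hr1, fun A hA => ?_⟩
  have hsub := expand_mono (M := M) (A := A) hM ht (le_refl r) htt
  exact ⟨(h A hA).1.trans (add_le_add_left (measure_mono hsub) _),
    (h A hA).2.trans (add_le_add_left (measure_mono hsub) _)⟩

lemma prokSet_mono_r (hM : IsFuzzyMetric M luk) {μ ν : Measure X} {t r r' : ℝ}
    (ht : 0 < t) (hr : r ∈ prokSet M μ ν t) (hrr : r ≤ r') (hr1 : r' < 1) :
    r' ∈ prokSet M μ ν t := by
  obtain ⟨hr0, _, h⟩ := hr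
  refine ⟨lt_of_lt_of_le hr0 hrr, hr1, fun A hA => ?_⟩
  have hsub := expand_mono (M := M) (A := A) hM ht hrr (le_refl t)
  have hof : ENNReal.ofReal r ≤ ENNReal.ofReal r' := ENNReal.ofReal_le_ofReal hrr
  exact ⟨(h A hA).1.trans (add_le_add (measure_mono hsub) hof),
    (h A hA).2.trans (add_le_add (measure_mono hsub) hof)⟩

lemma mem_prokSet_self (hM : IsFuzzyMetric M luk) {μ : Measure X} {t r : ℝ}
    (ht : 0 < t) (hr0 : 0 < r) (hr1 : r < 1) : r ∈ prokSet M μ μ t := by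
  refine ⟨hr0, hr1, fun A hA => ?_⟩
  have h := measure_mono (subset_expand (M := M) (A := A) hM hr0 ht) (μ := μ)
  exact ⟨le_trans h le_self_add, le_trans h le_self_add⟩

variable [TopologicalSpace X] [BorelSpace X]

lemma prokSet_triangle (hM : IsFuzzyMetric M luk) (hgen : GeneratesTopology M)
    {μ ν ξ : Measure X} {e ρ t₁ t₂ : ℝ} (ht₁ : 0 < t₁) (ht₂ : 0 < t₂)
    (he : e ∈ prokSet M μ ν t₁) (hρ : ρ ∈ prokSet M ν ξ t₂) (h1 : e + ρ < 1) :
    e + ρ ∈ prokSet M μ ξ (t₁ + t₂) := by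
  obtain ⟨he0, he1, hE⟩ := he
  obtain ⟨hρ0, hρ1, hR⟩ := hρ
  refine ⟨by linarith, h1, fun A hA => ?_⟩
  constructor
  · have h2 := (hE A hA).1
    have hmeas : MeasurableSet (fmExpand M A e t₁) :=
      (expand_open hgen he0 he1 ht₁).measurableSet
    have h3 := (hR _ hmeas).1
    have h4 : ξ (fmExpand M (fmExpand M A e t₁) ρ t₂) ≤ ξ (fmExpand M A (e + ρ) (t₁ + t₂)) :=
      measure_mono (expand_expand hM ht₁ ht₂)
    calc μ A ≤ ν (fmExpand M A e t₁) + ENNReal.ofReal e := h2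
      _ ≤ (ξ (fmExpand M (fmExpand M A e t₁) ρ t₂) + ENNReal.ofReal ρ) + ENNReal.ofReal e :=
          add_le_add_left h3 _
      _ ≤ (ξ (fmExpand M A (e + ρ) (t₁ + t₂)) + ENNReal.ofReal ρ) + ENNReal.ofReal e :=
          add_le_add_left (add_le_add_left h4 _) _
      _ = ξ (fmExpand M A (e + ρ) (t₁ + t₂)) + ENNReal.ofReal (e + ρ) := by
          rw [ENNReal.ofReal_add he0.le hρ0.le]; ring
  · have h2 := (hR A hA).2
    have hmeas : MeasurableSet (fmExpand M A ρ t₂) :=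
      (expand_open hgen hρ0 hρ1 ht₂).measurableSet
    have h3 := (hE _ hmeas).2
    have h4 : μ (fmExpand M (fmExpand M A ρ t₂) e t₁) ≤ μ (fmExpand M A (e + ρ) (t₁ + t₂)) := by
      refine measure_mono ((expand_expand hM ht₂ ht₁).trans ?_)
      rw [add_comm ρ e, add_comm t₂ t₁]
    calc ξ A ≤ ν (fmExpand M A ρ t₂) + ENNReal.ofReal ρ := h2
      _ ≤ (μ (fmExpand M (fmExpand M A ρ t₂) e t₁) + ENNReal.ofReal e) + ENNReal.ofReal ρ :=
          add_le_add_left h3 _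
      _ ≤ (μ (fmExpand M A (e + ρ) (t₁ + t₂)) + ENNReal.ofReal e) + ENNReal.ofReal ρ :=
          add_le_add_left (add_le_add_left h4 _) _
      _ = μ (fmExpand M A (e + ρ) (t₁ + t₂)) + ENNReal.ofReal (e + ρ) := by
          rw [ENNReal.ofReal_add he0.le hρ0.le]; ring

end Prok
end FPaux

namespace FPaux
variable {X : Type*} {M : X → X → ℝ → ℝ} [TopologicalSpace X]

lemma t2_of_gen (hM : IsFuzzyMetric M luk) (hgen : GeneratesTopology M) : T2Space X := by
  refine ⟨fun x y hxy => ?_⟩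
  have h1 : M x y 1 < 1 := lt_of_le_of_ne (hM.le_one x y 1 one_pos)
    (fun h => hxy ((hM.eq_one_iff x y 1 one_pos).mp h))
  have h0 : 0 < M x y 1 := hM.pos x y 1 one_pos
  set s : ℝ := 1 - M x y 1 with hs
  have hs0 : 0 < s := by simp only [hs]; linarith
  have hs1 : s < 1 := by simp only [hs]; linarith
  refine ⟨fmBall M x (s/2) (1/2), fmBall M y (s/2) (1/2),
    ball_open hgen (by linarith) (by linarith) (by norm_num),
    ball_open hgen (by linarith) (by linarith) (by norm_num),
    self_lt hM (by linarith) (by norm_num), self_lt hM (by linarith) (by norm_num), ?_⟩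
  rw [Set.disjoint_left]
  intro z hz hz'
  simp only [fmBall, mem_setOf_eq] at hz hz'
  have h2 := tri hM x z y (t := 1/2) (s := 1/2) (by norm_num) (by norm_num)
  rw [hM.symm y z (1/2) (by norm_num)] at hz'
  norm_num at h2
  simp only [hs] at hz hz'
  linarith

/-- Balls centered at a point are a neighborhood basis. -/
lemma centered_ball_subset (hM : IsFuzzyMetric M luk) (hgen : GeneratesTopology M)
    {U : Set X} {x : X} (hU : IsOpen U) (hx : x ∈ U) :
    ∃ r t : ℝ, 0 < r ∧ r < 1 ∧ 0 < t ∧ fmBall M x r t ⊆ U := by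
  obtain ⟨v, ⟨z, ρ, s, hρ0, hρ1, hs, rfl⟩, hxv, hvU⟩ :=
    hgen.exists_subset_of_mem_open hx hU
  simp only [fmBall, mem_setOf_eq] at hxv
  have hc : ContinuousAt (fun u => M z x u) s :=
    (hM.continuousOn z x).continuousAt (Ioi_mem_nhds hs)
  have hev : ∀ᶠ u in 𝓝 s, M z x u ∈ Ioi (1 - ρ) :=
    hc.eventually_mem (isOpen_Ioi.mem_nhds hxv)
  have hev2 : ∀ᶠ u in 𝓝 s, u ∈ Ioi (0:ℝ) := isOpen_Ioi.mem_nhds hs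
  have hlt : ∀ᶠ u in 𝓝[<] s, u ∈ Iio s := eventually_mem_nhdsWithin
  have hall : ∀ᶠ u in 𝓝[<] s, (M z x u ∈ Ioi (1 - ρ) ∧ u ∈ Ioi (0:ℝ)) ∧ u ∈ Iio s :=
    (((hev.and hev2).filter_mono nhdsWithin_le_nhds)).and hlt
  obtain ⟨s', ⟨hs'M, hs'0⟩, hs's⟩ := hall.exists
  simp only [mem_Ioi, mem_Iio] at hs'M hs'0 hs's
  set ε : ℝ := M z x s' - (1 - ρ) with hε
  have hε0 : 0 < ε := by simp only [hε]; linarith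
  refine ⟨min ε (1/2), s - s', lt_min hε0 (by norm_num),
    lt_of_le_of_lt (min_le_right _ _) (by norm_num), by linarith, ?_⟩
  intro y hy
  simp only [fmBall, mem_setOf_eq] at hy
  apply hvU
  simp only [fmBall, mem_setOf_eq]
  have h3 := tri hM z x y hs'0 (show 0 < s - s' by linarith)
  rw [show s' + (s - s') = s by ring] at h3
  have : 1 - ε ≤ 1 - min ε (1/2) := by
    have := min_le_left ε (1/2); linarith
  simp only [hε] at *
  linarith

end FPaux

namespace FPaux
variable {X : Type*} {M : X → X → ℝ → ℝ} [TopologicalSpace X]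

lemma continuous_pair (hM : IsFuzzyMetric M luk) (hgen : GeneratesTopology M)
    {t : ℝ} (ht : 0 < t) : Continuous (fun p : X × X => M p.1 p.2 t) := by
  rw [continuous_iff_continuousAt]
  rintro ⟨x₀, y₀⟩
  rw [ContinuousAt, Metric.tendsto_nhds]
  intro ε hε
  have hct : ContinuousAt (fun u => M x₀ y₀ u) t :=
    (hM.continuousOn x₀ y₀).continuousAt (Ioi_mem_nhds ht)
  have hev := Metric.tendsto_nhds.mp hct (ε/2) (by linarith)
  rw [Metric.eventually_nhds_iff] at hev
  obtain ⟨δ, hδ0, hδ⟩ := hev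
  set s : ℝ := min (δ/3) (t/3) with hsdef
  have hs0 : 0 < s := lt_min (by linarith) (by linarith)
  have hs1 : s ≤ δ/3 := min_le_left _ _
  have hs2 : s ≤ t/3 := min_le_right _ _
  have hta : 0 < t - 2*s := by linarith
  have htb : 0 < t - s := by linarith
  have ha : |M x₀ y₀ (t - 2*s) - M x₀ y₀ t| < ε/2 := by
    have := hδ (y := t - 2*s) (by rw [Real.dist_eq]; rw [abs_lt]; constructor <;> linarith)
    rwa [Real.dist_eq] at this
  have hb : |M x₀ y₀ (t + 2*s) - M x₀ y₀ t| < ε/2 := by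
    have := hδ (y := t + 2*s) (by rw [Real.dist_eq]; rw [abs_lt]; constructor <;> linarith)
    rwa [Real.dist_eq] at this
  set δ' : ℝ := min (ε/8) (1/2) with hδ'def
  have hδ'0 : 0 < δ' := lt_min (by linarith) (by norm_num)
  have hδ'1 : δ' < 1 := lt_of_le_of_lt (min_le_right _ _) (by norm_num)
  have hδ'ε : δ' ≤ ε/8 := min_le_left _ _
  have hmem : (fmBall M x₀ δ' s ×ˢ fmBall M y₀ δ' s) ∈ 𝓝 (x₀, y₀) :=
    prod_mem_nhds ((ball_open hgen hδ'0 hδ'1 hs0).mem_nhds (self_lt hM hδ'0 hs0))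
      ((ball_open hgen hδ'0 hδ'1 hs0).mem_nhds (self_lt hM hδ'0 hs0))
  filter_upwards [hmem]
  rintro ⟨x', y'⟩ ⟨hx', hy'⟩
  simp only [fmBall, mem_setOf_eq] at hx' hy'
  rw [Real.dist_eq, abs_lt]
  rw [abs_lt] at ha hb
  -- lower bound
  have l1 := tri hM x₀ y₀ y' hta hs0
  rw [show t - 2*s + s = t - s by ring] at l1
  have l2 := tri hM x' x₀ y' hs0 htb
  rw [show s + (t - s) = t by ring] at l2
  rw [hM.symm x' x₀ s hs0] at l2
  -- upper bound
  have u1 := tri hM x₀ x' y' hs0 ht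
  have u2 := tri hM x₀ y' y₀ (by linarith : (0:ℝ) < s + t) hs0
  rw [show s + t + s = t + 2*s by ring] at u2
  rw [hM.symm y' y₀ s hs0] at u2
  constructor <;> [skip; skip] <;> simp only [] <;> nlinarith [hM.le_one x₀ y' (t := s + t) (by linarith)]
  
lemma unif_left (hM : IsFuzzyMetric M luk) (hgen : GeneratesTopology M) [CompactSpace X]
    {t ε : ℝ} (ht : 0 < t) (hε : 0 < ε) :
    ∃ t₀ : ℝ, 0 < t₀ ∧ t₀ < t ∧ ∀ x y : X, M x y t - ε ≤ M x y t₀ := by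
  set U : ℕ → Set (X × X) := fun n => {p | M p.1 p.2 t - ε < M p.1 p.2 (t - t/(n+2))} with hU
  have htn : ∀ n : ℕ, 0 < t - t/(n+2) := by
    intro n
    have h2 : (2:ℝ) ≤ (n:ℝ) + 2 := by linarith [Nat.cast_nonneg (α := ℝ) n]
    have : t/((n:ℝ)+2) ≤ t/2 := by apply div_le_div_of_nonneg_left ht.le (by norm_num) h2
    linarith
  have hUopen : ∀ n, IsOpen (U n) := by
    intro n
    exact isOpen_lt ((continuous_pair hM hgen ht).sub continuous_const)
      (continuous_pair hM hgen (htn n))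
  have hcover : univ ⊆ ⋃ n, U n := by
    rintro ⟨x, y⟩ -
    have hct : ContinuousAt (fun u => M x y u) t :=
      (hM.continuousOn x y).continuousAt (Ioi_mem_nhds ht)
    have hev : ∀ᶠ u in 𝓝 t, M x y t - ε < M x y u := by
      have : Ioi (M x y t - ε) ∈ 𝓝 (M x y t) := isOpen_Ioi.mem_nhds (by simp; linarith)
      exact hct.eventually_mem this
    rw [Metric.eventually_nhds_iff] at hev
    obtain ⟨δ, hδ0, hδ⟩ := hev
    obtain ⟨n, hn⟩ := exists_nat_gt (t/δ)
    refine mem_iUnion.mpr ⟨n, ?_⟩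
    have hd : t/((n:ℝ)+2) < δ := by
      have h1 : 0 < (n:ℝ) + 2 := by positivity
      have h2 : t/δ < (n:ℝ) + 2 := by push_cast; linarith
      rw [div_lt_iff₀ h1]
      rw [div_lt_iff₀ hδ0] at h2
      linarith [mul_pos hδ0 h1]
    apply hδ
    rw [Real.dist_eq, abs_lt]
    have := (htn n)
    have h3 : 0 < t/((n:ℝ)+2) := by positivity
    constructor <;> linarith
  obtain ⟨F, hF⟩ := isCompact_univ.elim_finite_subcover U hUopen hcover
  set N : ℕ := F.sup id with hN
  refine ⟨t - t/(N+2), htn N, ?_, ?_⟩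
  · have : 0 < t/((N:ℝ)+2) := by positivity
    linarith
  · intro x y
    obtain ⟨n, hnF, hn⟩ := mem_iUnion₂.mp (hF (mem_univ (x, y)))
    have hnN : n ≤ N := Finset.le_sup (f := id) hnF
    have hmono : M x y (t - t/(n+2)) ≤ M x y (t - t/(N+2)) := by
      apply mono_t hM x y (htn n)
      have h1 : ((n:ℝ)+2) ≤ ((N:ℝ)+2) := by push_cast; exact_mod_cast by exact_mod_cast add_le_add_left (Nat.cast_le.mpr hnN) 2
      have : t/((N:ℝ)+2) ≤ t/((n:ℝ)+2) := by
        apply div_le_div_of_nonneg_left ht.le (by positivity) h1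
      linarith
    simp only [hU, mem_setOf_eq] at hn
    linarith

lemma fin_cover (hM : IsFuzzyMetric M luk) (hgen : GeneratesTopology M) [CompactSpace X]
    {δ τ : ℝ} (hδ0 : 0 < δ) (hδ1 : δ < 1) (hτ : 0 < τ) :
    ∃ C : Finset X, ∀ x : X, ∃ c ∈ C, x ∈ fmBall M c δ τ := by
  obtain ⟨C, hC⟩ := isCompact_univ.elim_finite_subcover (fun c : X => fmBall M c δ τ)
    (fun c => ball_open hgen hδ0 hδ1 hτ) (fun x _ => mem_iUnion.mpr ⟨x, self_lt hM hδ0 hτ⟩)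
  exact ⟨C, fun x => by simpa using mem_iUnion₂.mp (hC (mem_univ x))⟩

end FPaux

namespace FPaux
variable {X : Type*} {M : X → X → ℝ → ℝ} [TopologicalSpace X]

lemma closure_ball (hM : IsFuzzyMetric M luk) (hgen : GeneratesTopology M) {c : X} {r r' t t' : ℝ}
    (hr0 : 0 < r) (hrr : r < r') (ht : 0 < t) (htt : t < t') :
    closure (fmBall M c r t) ⊆ fmBall M c r' t' := by
  intro y hy
  set ρ : ℝ := min (r' - r) (1/2) with hρdef
  have hρ0 : 0 < ρ := lt_min (by linarith) (by norm_num)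
  have hρle : ρ ≤ r' - r := min_le_left _ _
  have hρ1 : ρ < 1 := lt_of_le_of_lt (min_le_right _ _) (by norm_num)
  obtain ⟨z, hz1, hz2⟩ := mem_closure_iff.mp hy (fmBall M y ρ (t' - t))
    (ball_open hgen hρ0 hρ1 (by linarith)) (self_lt hM hρ0 (by linarith))
  simp only [fmBall, mem_setOf_eq] at hz1 hz2 ⊢
  have h3 := tri hM c z y ht (show 0 < t' - t by linarith)
  rw [show t + (t' - t) = t' by ring] at h3
  rw [hM.symm z y (t' - t) (by linarith)] at h3
  linarith

section Core
variable [MeasurableSpace X] [BorelSpace X] [CompactSpace X]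

lemma cont_integrable (f : C(X, ℝ)) (μ : Measure X) [IsFiniteMeasure μ] :
    Integrable (fun x => f x) μ :=
  (BoundedContinuousFunction.mkOfCompact f).integrable μ

lemma meas_le_integral {μ : Measure X} [IsProbabilityMeasure μ] {S : Set X}
    (hS : MeasurableSet S) {f : C(X, ℝ)} (hf1 : ∀ x ∈ S, 1 ≤ f x) (hf0 : ∀ x, 0 ≤ f x) :
    (μ S).toReal ≤ ∫ x, f x ∂μ := by
  have h1 : ∫ x, S.indicator (fun _ => (1:ℝ)) x ∂μ = (μ S).toReal := by
    rw [integral_indicator_const (1:ℝ) hS]; simp [Measure.real]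
  rw [← h1]
  apply integral_mono (integrable_indicator_iff hS |>.mpr (by simp [integrableOn_const]))
    (cont_integrable f μ)
  intro x
  by_cases hx : x ∈ S
  · simp [Set.indicator_of_mem hx, hf1 x hx]
  · simp [Set.indicator_of_notMem hx, hf0 x]

lemma integral_le_meas {μ : Measure X} [IsProbabilityMeasure μ] {S : Set X}
    (hS : MeasurableSet S) {f : C(X, ℝ)} (hf1 : ∀ x, f x ≤ 1) (hf0 : ∀ x ∉ S, f x ≤ 0) :
    ∫ x, f x ∂μ ≤ (μ S).toReal := by
  have h1 : ∫ x, S.indicator (fun _ => (1:ℝ)) x ∂μ = (μ S).toReal := by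
    rw [integral_indicator_const (1:ℝ) hS]; simp [Measure.real]
  rw [← h1]
  apply integral_mono (cont_integrable f μ)
    (integrable_indicator_iff hS |>.mpr (by simp [integrableOn_const]))
  intro x
  by_cases hx : x ∈ S
  · simp [Set.indicator_of_mem hx, hf1 x]
  · simp [Set.indicator_of_notMem hx, hf0 x hx]

lemma ennreal_step {μ ν : Measure X} [IsProbabilityMeasure μ] [IsProbabilityMeasure ν]
    {A B : Set X} {r : ℝ} (hr : 0 ≤ r) (h : (μ A).toReal ≤ (ν B).toReal + r) :
    μ A ≤ ν B + ENNReal.ofReal r := by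
  have h1 : μ A = ENNReal.ofReal (μ A).toReal := (ENNReal.ofReal_toReal (measure_ne_top μ A)).symm
  rw [h1]
  calc ENNReal.ofReal (μ A).toReal ≤ ENNReal.ofReal ((ν B).toReal + r) :=
        ENNReal.ofReal_le_ofReal h
    _ = ENNReal.ofReal (ν B).toReal + ENNReal.ofReal r := ENNReal.ofReal_add ENNReal.toReal_nonneg hr
    _ = ν B + ENNReal.ofReal r := by rw [ENNReal.ofReal_toReal (measure_ne_top ν B)]

lemma toReal_mono_meas {μ : Measure X} [IsProbabilityMeasure μ] {A B : Set X} (h : A ⊆ B) :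
    (μ A).toReal ≤ (μ B).toReal :=
  ENNReal.toReal_mono (measure_ne_top μ B) (measure_mono h)

/-- The core approximation lemma: there are finitely many test functions such that closeness of
integrals against them forces membership of `r` in the Prokhorov set. -/
lemma core (hM : IsFuzzyMetric M luk) (hgen : GeneratesTopology M)
    {t r : ℝ} (ht : 0 < t) (hr0 : 0 < r) (hr1 : r < 1) :
    ∃ G : Finset C(X, ℝ), ∀ μ ν : ProbabilityMeasure X,
      (∀ f ∈ G, |∫ x, f x ∂(μ : Measure X) - ∫ x, f x ∂(ν : Measure X)| < r/2) →
      r ∈ prokSet M (μ : Measure X) (ν : Measure X) t := by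
  classical
  haveI : T2Space X := t2_of_gen hM hgen
  set δ : ℝ := r/3 with hδdef
  have hδ0 : 0 < δ := by linarith
  have hδ1 : δ < 1 := by linarith
  have h2δ1 : 2*δ < 1 := by linarith
  obtain ⟨C, hC⟩ := fin_cover hM hgen hδ0 hδ1 (show (0:ℝ) < t/4 by linarith)
  set S : Finset X → Set X := fun J => ⋃ c ∈ J, fmBall M c δ (t/4) with hSdef
  set S' : Finset X → Set X := fun J => ⋃ c ∈ J, fmBall M c (2*δ) (t/2) with hS'def
  have hSopen : ∀ J, IsOpen (S J) := fun J =>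
    isOpen_biUnion fun c _ => ball_open hgen hδ0 hδ1 (by linarith)
  have hS'open : ∀ J, IsOpen (S' J) := fun J =>
    isOpen_biUnion fun c _ => ball_open hgen (by linarith) h2δ1 (by linarith)
  have hclos : ∀ J : Finset X, closure (S J) ⊆ S' J := by
    intro J
    rw [hSdef]
    rw [Finset.closure_biUnion]
    refine iUnion₂_mono fun c _ => ?_
    exact closure_ball hM hgen hδ0 (by linarith) (by linarith) (by linarith)
  have hury : ∀ J : Finset X, ∃ f : C(X, ℝ),
      EqOn f 0 (S' J)ᶜ ∧ EqOn f 1 (closure (S J)) ∧ ∀ x, f x ∈ Icc (0:ℝ) 1 := by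
    intro J
    exact exists_continuous_zero_one_of_isClosed (hS'open J).isClosed_compl isClosed_closure
      (by rw [Set.disjoint_compl_left_iff_subset]; exact hclos J)
  choose g hg0 hg1 hg01 using hury
  refine ⟨C.powerset.image g, ?_⟩
  intro μ ν h
  refine ⟨hr0, hr1, fun A hA => ?_⟩
  set J : Finset X := C.filter (fun c => (fmBall M c δ (t/4) ∩ A).Nonempty) with hJdef
  have hJC : J ∈ C.powerset := Finset.mem_powerset.mpr (Finset.filter_subset _ _)
  have hfmem : g J ∈ C.powerset.image g := Finset.mem_image_of_mem g hJC
  have hint := h (g J) hfmem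
  -- A ⊆ S J
  have hAS : A ⊆ S J := by
    intro a ha
    obtain ⟨c, hcC, hac⟩ := hC a
    have hcJ : c ∈ J := Finset.mem_filter.mpr ⟨hcC, ⟨a, hac, ha⟩⟩
    exact mem_biUnion hcJ hac
  -- S' J ⊆ fmExpand M A r t
  have hS'E : S' J ⊆ fmExpand M A r t := by
    intro y hy
    simp only [hS'def, mem_iUnion, exists_prop] at hy
    obtain ⟨c, hcJ, hcy⟩ := hy
    obtain ⟨hcC, a, hab, haA⟩ := Finset.mem_filter.mp hcJ
    refine mem_biUnion haA ?_
    simp only [fmBall, mem_setOf_eq] at *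
    have h1 := tri hM a c y (show (0:ℝ) < t/4 by linarith) (show (0:ℝ) < t/2 by linarith)
    rw [hM.symm a c (t/4) (by linarith)] at h1
    have h2 : M a y (t/4 + t/2) ≤ M a y t := mono_t hM a y (by linarith) (by linarith)
    have hδr : δ = r/3 := rfl
    linarith [hab]
  -- function facts
  have hf1 : ∀ x ∈ S J, 1 ≤ g J x := fun x hx => by
    have := hg1 J (subset_closure hx); simp only [Pi.one_apply] at this; rw [this]
  have hf0 : ∀ x, 0 ≤ g J x := fun x => (hg01 J x).1
  have hfle1 : ∀ x, g J x ≤ 1 := fun x => (hg01 J x).2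
  have hf0' : ∀ x ∉ S' J, g J x ≤ 0 := fun x hx => by
    have := hg0 J hx; simp only [Pi.zero_apply] at this; rw [this]
  have key : ∀ (κ κ' : ProbabilityMeasure X),
      (∫ x, g J x ∂(κ : Measure X) - ∫ x, g J x ∂(κ' : Measure X) < r/2) →
      (κ : Measure X) A ≤ (κ' : Measure X) (fmExpand M A r t) + ENNReal.ofReal r := by
    intro κ κ' hκ
    apply ennreal_step hr0.le
    calc ((κ : Measure X) A).toReal ≤ ((κ : Measure X) (S J)).toReal := toReal_mono_meas hAS
      _ ≤ ∫ x, g J x ∂(κ : Measure X) := meas_le_integral (hSopen J).measurableSet hf1 hf0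
      _ ≤ ∫ x, g J x ∂(κ' : Measure X) + r/2 := by linarith
      _ ≤ ((κ' : Measure X) (S' J)).toReal + r/2 :=
          add_le_add_left (integral_le_meas (hS'open J).measurableSet hfle1 hf0') _
      _ ≤ ((κ' : Measure X) (fmExpand M A r t)).toReal + r :=
          add_le_add (toReal_mono_meas hS'E) (by linarith)
  rw [abs_lt] at hint
  exact ⟨key μ ν (by linarith [hint.2]), key ν μ (by linarith [hint.1])⟩

end Core
end FPaux

namespace FPaux
variable {X : Type*} {M : X → X → ℝ → ℝ} [TopologicalSpace X]
  [MeasurableSpace X] [BorelSpace X] [CompactSpace X]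

lemma prokSet_nonempty (hM : IsFuzzyMetric M luk) (hgen : GeneratesTopology M)
    (μ ν : ProbabilityMeasure X) {t : ℝ} (ht : 0 < t) :
    (prokSet M (μ : Measure X) (ν : Measure X) t).Nonempty := by
  classical
  have ht2 : (0:ℝ) < t/2 := by linarith
  by_cases hne : Nonempty X
  · -- per-point radii
    have hpt : ∀ x : X, ∃ s : ℝ, 0 < s ∧ s < 1 ∧
        (1/2 : ℝ≥0∞) < (μ : Measure X) (fmBall M x s (t/2)) ∧
        (1/2 : ℝ≥0∞) < (ν : Measure X) (fmBall M x s (t/2)) := by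
      intro x
      set B : ℕ → Set X := fun n => fmBall M x (1 - 1/(n+1)) (t/2) with hB
      have hmono : Monotone B := by
        intro m n hmn
        apply ball_mono hM ht2 _ (le_refl _)
        have h1 : (1:ℝ)/(n+1) ≤ 1/(m+1) := by
          apply div_le_div_of_nonneg_left one_pos.le (by positivity)
          push_cast; linarith [(Nat.cast_le (α := ℝ)).mpr hmn]
        linarith
      have hunion : ⋃ n, B n = univ := by
        ext y
        simp only [mem_iUnion, mem_univ, iff_true]
        obtain ⟨n, hn⟩ := exists_nat_one_div_lt (hM.pos x y (t/2) ht2)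
        exact ⟨n, by simp only [hB, fmBall, mem_setOf_eq]; push_cast; linarith⟩
      have h12 : (1/2 : ℝ≥0∞) < 1 := by norm_num
      have hevμ : ∀ᶠ n in atTop, (1/2 : ℝ≥0∞) < (μ : Measure X) (B n) := by
        have := tendsto_measure_iUnion_atTop (μ := (μ : Measure X)) hmono
        rw [hunion, measure_univ] at this
        exact this.eventually (eventually_gt_nhds h12)
      have hevν : ∀ᶠ n in atTop, (1/2 : ℝ≥0∞) < (ν : Measure X) (B n) := by
        have := tendsto_measure_iUnion_atTop (μ := (ν : Measure X)) hmono
        rw [hunion, measure_univ] at this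
        exact this.eventually (eventually_gt_nhds h12)
      obtain ⟨n, ⟨h1, h2⟩, hn1⟩ := ((hevμ.and hevν).and (eventually_ge_atTop 1)).exists
      have hn1' : (1:ℝ) ≤ n := by exact_mod_cast hn1
      refine ⟨1 - 1/(n+1), by
          have : (1:ℝ)/(n+1) ≤ 1/2 := by
            apply div_le_div_of_nonneg_left one_pos.le (by norm_num) (by push_cast; linarith)
          have h0 : (0:ℝ) < 1/(n+1) := by positivity
          linarith, by
          have h0 : (0:ℝ) < 1/(n+1) := by positivity
          linarith, h1, h2⟩
    choose sf hs0 hs1 hsμ hsν using hpt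
    set η : X → ℝ := fun x => (1 - sf x)/2 with hη
    have hη0 : ∀ x, 0 < η x := fun x => by have := hs1 x; simp only [hη]; linarith
    have hη1 : ∀ x, η x < 1 := fun x => by have := hs0 x; simp only [hη]; linarith
    obtain ⟨F, hF⟩ := isCompact_univ.elim_finite_subcover (fun c : X => fmBall M c (η c) (t/2))
      (fun c => ball_open hgen (hη0 c) (hη1 c) ht2)
      (fun x _ => mem_iUnion.mpr ⟨x, self_lt hM (hη0 x) ht2⟩)
    have hFne : F.Nonempty := by
      obtain ⟨x⟩ := hne
      obtain ⟨c, hc, _⟩ := by simpa using mem_iUnion₂.mp (hF (mem_univ x))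
      exact ⟨c, hc⟩
    set r : ℝ := max (1/2) (F.sup' hFne (fun c => 1 - η c)) with hrdef
    have hr12 : (1/2 : ℝ) ≤ r := le_max_left _ _
    have hr0 : 0 < r := by linarith
    have hr1 : r < 1 := by
      apply max_lt (by norm_num)
      rw [Finset.sup'_lt_iff]
      intro c _
      linarith [hη0 c]
    have hbound : ∀ (κ : ProbabilityMeasure X),
        (∀ c : X, (1/2 : ℝ≥0∞) < (κ : Measure X) (fmBall M c (sf c) (t/2))) →
        ∀ A : Set X, A.Nonempty →
        (1 : ℝ≥0∞) ≤ (κ : Measure X) (fmExpand M A r t) + ENNReal.ofReal r := by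
      intro κ hκ A ⟨a, ha⟩
      obtain ⟨c, hcF, hac⟩ := by simpa using mem_iUnion₂.mp (hF (mem_univ a))
      have hsub : fmBall M c (sf c) (t/2) ⊆ fmExpand M A r t := by
        intro y hy
        refine mem_biUnion ha ?_
        simp only [fmBall, mem_setOf_eq] at hy hac ⊢
        have h1 := tri hM a c y ht2 ht2
        rw [hM.symm a c (t/2) ht2, show t/2 + t/2 = t by ring] at h1
        have hcr : 1 - η c ≤ r := le_trans (Finset.le_sup' (fun c => 1 - η c) hcF)
          (le_max_right _ _)
        have : η c = (1 - sf c)/2 := rfl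
        linarith
      have h2 : (1/2 : ℝ≥0∞) ≤ (κ : Measure X) (fmExpand M A r t) :=
        le_trans (hκ c).le (measure_mono hsub)
      have h3 : (1/2 : ℝ≥0∞) ≤ ENNReal.ofReal r := by
        rw [show (1/2 : ℝ≥0∞) = ENNReal.ofReal (1/2) by
          rw [ENNReal.ofReal_div_of_pos] <;> norm_num]
        exact ENNReal.ofReal_le_ofReal hr12
      calc (1:ℝ≥0∞) = 1/2 + 1/2 := (ENNReal.add_halves 1).symm
        _ ≤ _ := add_le_add h2 h3
    refine ⟨r, hr0, hr1, fun A hA => ?_⟩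
    rcases A.eq_empty_or_nonempty with rfl | hAne
    · simp
    · constructor
      · exact le_trans (le_trans prob_le_one (hbound ν hsν A hAne))
          (le_refl _)
      · exact le_trans prob_le_one (hbound μ hsμ A hAne)
  · refine ⟨1/2, by norm_num, by norm_num, fun A hA => ?_⟩
    have : A = ∅ := by
      rw [Set.eq_empty_iff_forall_notMem]; intro x; exact absurd ⟨x⟩ hne
    subst this
    simp
end FPaux

namespace FPaux
variable {X : Type*} {M : X → X → ℝ → ℝ} [TopologicalSpace X]

section Mod
variable [CompactSpace X]

/-- Uniform continuity modulus for a continuous function w.r.t. the fuzzy metric. -/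
lemma modulus (hM : IsFuzzyMetric M luk) (hgen : GeneratesTopology M) (f : C(X, ℝ))
    {ε : ℝ} (hε : 0 < ε) :
    ∃ r₀ t₀ : ℝ, 0 < r₀ ∧ r₀ < 1 ∧ 0 < t₀ ∧
      ∀ x y : X, 1 - r₀ < M x y t₀ → |f x - f y| ≤ ε := by
  classical
  by_cases hne : Nonempty X
  · have hpt : ∀ x : X, ∃ r t : ℝ, 0 < r ∧ r < 1 ∧ 0 < t ∧
        fmBall M x r t ⊆ f ⁻¹' (Metric.ball (f x) (ε/2)) := by
      intro x
      exact centered_ball_subset hM hgen (f.continuous.isOpen_preimage _ Metric.isOpen_ball)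
        (by simp [Metric.mem_ball]; linarith)
    choose rr tt hr0 hr1 ht0 hsub using hpt
    obtain ⟨F, hF⟩ := isCompact_univ.elim_finite_subcover
      (fun c : X => fmBall M c (rr c / 2) (tt c / 2))
      (fun c => ball_open hgen (by linarith [hr0 c]) (by linarith [hr1 c]) (by linarith [ht0 c]))
      (fun x _ => mem_iUnion.mpr ⟨x, self_lt hM (by linarith [hr0 x]) (by linarith [ht0 x])⟩)
    have hFne : F.Nonempty := by
      obtain ⟨x⟩ := hne
      obtain ⟨c, hc, _⟩ := by simpa using mem_iUnion₂.mp (hF (mem_univ x))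
      exact ⟨c, hc⟩
    set t₀ : ℝ := F.inf' hFne (fun c => tt c / 2) with ht₀def
    set r₀ : ℝ := min (1/2) (F.inf' hFne (fun c => rr c / 2)) with hr₀def
    have ht₀pos : 0 < t₀ := by
      rw [ht₀def, Finset.lt_inf'_iff]
      intro c _; linarith [ht0 c]
    have hr₀pos : 0 < r₀ := by
      rw [hr₀def, lt_min_iff]
      refine ⟨by norm_num, ?_⟩
      rw [Finset.lt_inf'_iff]
      intro c _; linarith [hr0 c]
    refine ⟨r₀, t₀, hr₀pos, lt_of_le_of_lt (min_le_left _ _) (by norm_num), ht₀pos, ?_⟩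
    intro x y hxy
    obtain ⟨c, hcF, hxc⟩ := by simpa using mem_iUnion₂.mp (hF (mem_univ x))
    have hr₀c : r₀ ≤ rr c / 2 := le_trans (min_le_right _ _) (Finset.inf'_le _ hcF)
    have ht₀c : t₀ ≤ tt c / 2 := Finset.inf'_le _ hcF
    simp only [fmBall, mem_setOf_eq] at hxc
    have h1 := tri hM c x y (t := tt c / 2) (s := t₀) (by linarith [ht0 c]) ht₀pos
    have h2 : M c y (tt c / 2 + t₀) ≤ M c y (tt c) :=
      mono_t hM c y (by linarith [ht0 c]) (by linarith [ht0 c])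
    have hyc : y ∈ fmBall M c (rr c) (tt c) := by
      simp only [fmBall, mem_setOf_eq]; linarith
    have hxc' : x ∈ fmBall M c (rr c) (tt c) := by
      simp only [fmBall, mem_setOf_eq]
      have : M c x (tt c / 2) ≤ M c x (tt c) :=
        mono_t hM c x (by linarith [ht0 c]) (by linarith [ht0 c])
      linarith [hr1 c]
    have hy' := hsub c hyc
    have hx' := hsub c hxc'
    simp only [mem_preimage, Metric.mem_ball, Real.dist_eq] at hy' hx'
    rw [abs_lt] at hy' hx'
    rw [abs_le]
    constructor <;> linarith
  · refine ⟨1/2, 1, by norm_num, by norm_num, by norm_num, fun x => absurd ⟨x⟩ hne⟩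

end Mod

section P1
variable [MeasurableSpace X] [BorelSpace X] [CompactSpace X]

lemma part1 (hM : IsFuzzyMetric M luk) (hgen : GeneratesTopology M)
    (μs : ℕ → ProbabilityMeasure X) (μ : ProbabilityMeasure X)
    (h : ∀ φ : C(X, ℝ), Filter.Tendsto (fun i => ∫ x, φ x ∂(μs i : Measure X))
      Filter.atTop (nhds (∫ x, φ x ∂(μ : Measure X))))
    (t : ℝ) (ht : 0 < t) (ε : ℝ) (hε : ε ∈ Ioo (0:ℝ) 1) :
    ∃ N : ℕ, ∀ i ≥ N, 1 - ε < fuzzyProkhorov M (μs i : Measure X) (μ : Measure X) t := by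
  obtain ⟨hε0, hε1⟩ := hε
  set r : ℝ := ε/2 with hrdef
  obtain ⟨G, hG⟩ := core hM hgen ht (show 0 < r by linarith) (show r < 1 by linarith)
  have hev : ∀ᶠ i in atTop, ∀ f ∈ G, |∫ x, f x ∂(μs i : Measure X) - ∫ x, f x ∂(μ : Measure X)| < r/2 := by
    rw [eventually_all_finset]
    intro f hf
    have := Metric.tendsto_nhds.mp (h f) (r/2) (by linarith)
    simpa [Real.dist_eq] using this
  obtain ⟨N, hN⟩ := eventually_atTop.mp hev
  refine ⟨N, fun i hi => ?_⟩
  have hmem := hG (μs i) μ (hN i hi)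
  have hle : sInf (prokSet M (μs i : Measure X) (μ : Measure X) t) ≤ r :=
    csInf_le prokSet_bddBelow hmem
  rw [fuzzyProkhorov]
  linarith

end P1
end FPaux

namespace FPaux
variable {X : Type*} {M : X → X → ℝ → ℝ} [TopologicalSpace X]
  [MeasurableSpace X] [BorelSpace X] [CompactSpace X]

lemma int_close (hM : IsFuzzyMetric M luk) (hgen : GeneratesTopology M) (f : C(X, ℝ))
    {ε : ℝ} (hε : 0 < ε) :
    ∃ ρ₀ τ₀ : ℝ, 0 < ρ₀ ∧ 0 < τ₀ ∧ ∀ (μ ν : ProbabilityMeasure X) (e τ : ℝ),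
      0 < τ → τ ≤ τ₀ → e ≤ ρ₀ → e ∈ prokSet M (μ : Measure X) (ν : Measure X) τ →
      |∫ x, f x ∂(μ : Measure X) - ∫ x, f x ∂(ν : Measure X)| ≤ ε := by
  classical
  set h : ℝ := ε/4 with hh
  have hh0 : 0 < h := by linarith
  obtain ⟨r₀, t₀, hr₀0, hr₀1, ht₀0, hmod⟩ := modulus hM hgen f hh0
  set Cb : ℝ := ‖BoundedContinuousFunction.mkOfCompact f‖ with hCbdef
  have hCb0 : 0 ≤ Cb := norm_nonneg _
  have hCb : ∀ x, |f x| ≤ Cb := fun x => by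
    have := (BoundedContinuousFunction.mkOfCompact f).norm_coe_le_norm x
    simpa [Real.norm_eq_abs, hCbdef] using this
  set g : X → ℝ := fun x => f x + Cb with hgdef
  have hg0 : ∀ x, 0 ≤ g x := fun x => by have := (abs_le.mp (hCb x)).1; simp only [hgdef]; linarith
  have hgle : ∀ x, g x ≤ 2*Cb := fun x => by
    have := (abs_le.mp (hCb x)).2; simp only [hgdef]; linarith
  have hgcont : Continuous g := f.continuous.add continuous_const
  set Kc : ℕ := ⌈(2*Cb)/h⌉₊ with hKcdef
  set K : ℕ := Kc + 1 with hKdef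
  set G : ℕ → Set X := fun k => {x | (k:ℝ)*h < g x} with hGdef
  have hGopen : ∀ k, IsOpen (G k) := fun k => isOpen_lt continuous_const hgcont
  have hGmeas : ∀ k, MeasurableSet (G k) := fun k => (hGopen k).measurableSet
  set ρ₀ : ℝ := min r₀ (ε/(4*(2*Cb+2*h+1))) with hρ₀def
  have hρ₀0 : 0 < ρ₀ := lt_min hr₀0 (by positivity)
  refine ⟨ρ₀, t₀, hρ₀0, ht₀0, ?_⟩
  -- notation
  set mm : ProbabilityMeasure X → ℕ → ℝ := fun κ k => ((κ : Measure X) (G k)).toReal with hmmdef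
  have hmm0 : ∀ κ k, 0 ≤ mm κ k := fun κ k => ENNReal.toReal_nonneg
  have hmm1 : ∀ κ k, mm κ k ≤ 1 := fun κ k => by
    have h1 : (κ : Measure X) (G k) ≤ 1 := prob_le_one
    calc ((κ : Measure X) (G k)).toReal ≤ (1 : ℝ≥0∞).toReal :=
      ENNReal.toReal_mono (by norm_num) h1
      _ = 1 := by simp
  -- sum representation
  have hind_int : ∀ (κ : ProbabilityMeasure X) (k : ℕ),
      Integrable (fun x => h * (G k).indicator (fun _ => (1:ℝ)) x) (κ : Measure X) := by
    intro κ k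
    exact (((integrable_indicator_iff (hGmeas k)).mpr
      ((integrableOn_const_iff).mpr (Or.inr (measure_lt_top _ _))))).const_mul h
  have sum_int : ∀ (κ : ProbabilityMeasure X),
      Integrable (fun x => ∑ k ∈ Finset.range K, h * (G (k+1)).indicator (fun _ => (1:ℝ)) x)
        (κ : Measure X) := fun κ => integrable_finset_sum _ (fun k _ => hind_int κ (k+1))
  have sum_repr : ∀ (κ : ProbabilityMeasure X),
      ∫ x, (∑ k ∈ Finset.range K, h * (G (k+1)).indicator (fun _ => (1:ℝ)) x) ∂(κ : Measure X)
        = ∑ k ∈ Finset.range K, h * mm κ (k+1) := by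
    intro κ
    rw [integral_finset_sum _ (fun k _ => hind_int κ (k+1))]
    refine Finset.sum_congr rfl fun k _ => ?_
    rw [integral_const_mul, integral_indicator_const (1:ℝ) (hGmeas (k+1))]
    simp [hmmdef, Measure.real]
  have g_int : ∀ (κ : ProbabilityMeasure X), Integrable g (κ : Measure X) := fun κ =>
    (cont_integrable f _).add (integrable_const Cb)
  have g_repr : ∀ (κ : ProbabilityMeasure X),
      ∫ x, g x ∂(κ : Measure X) = (∫ x, f x ∂(κ : Measure X)) + Cb := by
    intro κ
    rw [show g = fun x => f x + Cb from rfl, integral_add (cont_integrable f _) (integrable_const Cb)]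
    simp
  -- pointwise bounds
  have hpoint : ∀ x : X,
      (∑ k ∈ Finset.range K, h * (G (k+1)).indicator (fun _ => (1:ℝ)) x) ≤ g x ∧
      g x ≤ 2*h + ∑ k ∈ Finset.range K, h * (G (k+1)).indicator (fun _ => (1:ℝ)) x := by
    intro x
    set T : Finset ℕ := (Finset.range K).filter (fun k : ℕ => ((k:ℝ)+1)*h < g x) with hTdef
    have hsum : (∑ k ∈ Finset.range K, h * (G (k+1)).indicator (fun _ => (1:ℝ)) x)
        = T.card * h := by
      rw [hTdef, ← Finset.sum_filter_add_sum_filter_not (Finset.range K)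
        (fun k : ℕ => ((k:ℝ)+1)*h < g x)]
      have h1 : ∀ k ∈ (Finset.range K).filter (fun k : ℕ => ((k:ℝ)+1)*h < g x),
          h * (G (k+1)).indicator (fun _ => (1:ℝ)) x = h := by
        intro k hk
        have hk2 := (Finset.mem_filter.mp hk).2
        have hx : x ∈ G (k+1) := by simp only [hGdef, mem_setOf_eq]; push_cast; linarith
        simp [Set.indicator_of_mem hx]
      have h2 : ∀ k ∈ (Finset.range K).filter (fun k : ℕ => ¬ (((k:ℝ)+1)*h < g x)),
          h * (G (k+1)).indicator (fun _ => (1:ℝ)) x = 0 := by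
        intro k hk
        have hk2 := (Finset.mem_filter.mp hk).2
        have hx : x ∉ G (k+1) := by simp only [hGdef, mem_setOf_eq]; push_cast; push_neg at hk2 ⊢; linarith
        simp [Set.indicator_of_notMem hx]
      rw [Finset.sum_congr rfl h1, Finset.sum_congr rfl h2]
      simp [mul_comm]
    set m : ℕ := ⌊g x / h⌋₊ with hmdef
    have hmle : (m:ℝ) * h ≤ g x := by
      have := Nat.floor_le (div_nonneg (hg0 x) hh0.le)
      calc (m:ℝ) * h ≤ (g x / h) * h := mul_le_mul_of_nonneg_right this hh0.le
        _ = g x := by field_simp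
    have hlt : g x < ((m:ℝ)+1) * h := by
      have := Nat.lt_floor_add_one (g x / h)
      calc g x = (g x / h) * h := by field_simp
        _ < ((m:ℝ)+1) * h := mul_lt_mul_of_pos_right (by exact_mod_cast this) hh0
    have hmKc : m ≤ Kc := by
      have h1 : g x / h ≤ (2*Cb)/h := by
        exact (div_le_div_iff_of_pos_right hh0).mpr (hgle x)
      have h2 : (2*Cb)/h ≤ (Kc:ℝ) := Nat.le_ceil _
      have : g x / h ≤ (Kc:ℝ) := h1.trans h2
      calc m = ⌊g x / h⌋₊ := rfl
        _ ≤ ⌊(Kc:ℝ)⌋₊ := Nat.floor_mono this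
        _ = Kc := Nat.floor_natCast _
    constructor
    · -- lower: sum ≤ g x
      rw [hsum]
      have hTsub : T ⊆ Finset.range m := by
        intro k hk
        obtain ⟨hk1, hk2⟩ := Finset.mem_filter.mp hk
        rw [Finset.mem_range]
        by_contra hkm
        push_neg at hkm
        have : (m:ℝ) ≤ (k:ℝ) := by exact_mod_cast hkm
        nlinarith
      have : (T.card : ℝ) ≤ (m:ℝ) := by
        exact_mod_cast Finset.card_le_card hTsub |>.trans (by simp)
      nlinarith
    · -- upper: g x ≤ 2h + sum
      rw [hsum]
      rcases Nat.eq_zero_or_pos m with hm0 | hm1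
      · have : g x < h := by
          rw [hm0] at hlt; push_cast at hlt; linarith
        have : (0:ℝ) ≤ (T.card : ℝ) * h := by positivity
        linarith
      · have hTsup : Finset.range (m - 1) ⊆ T := by
          intro k hk
          rw [Finset.mem_range] at hk
          have hk1 : k + 1 < m := by omega
          refine Finset.mem_filter.mpr ⟨Finset.mem_range.mpr (by omega), ?_⟩
          have hcast : ((k:ℝ)+1) * h < (m:ℝ) * h := by
            have hc : ((k:ℝ)+1) < (m:ℝ) := by exact_mod_cast hk1
            nlinarith
          linarith [hmle]
        have hcard : ((m:ℝ) - 1) ≤ (T.card : ℝ) := by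
          have := Finset.card_le_card hTsup
          rw [Finset.card_range] at this
          have h2 : ((m - 1 : ℕ):ℝ) ≤ (T.card : ℝ) := by exact_mod_cast this
          rw [Nat.cast_sub (by omega)] at h2
          simpa using h2
        nlinarith
  -- main one-sided estimate
  have key : ∀ (μ ν : ProbabilityMeasure X) (e τ : ℝ),
      0 < τ → τ ≤ t₀ → e ≤ ρ₀ → e ∈ prokSet M (μ : Measure X) (ν : Measure X) τ →
      ∫ x, f x ∂(μ : Measure X) - ∫ x, f x ∂(ν : Measure X) ≤ ε := by
    intro μ ν e τ hτ0 hτt₀ heρ he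
    obtain ⟨he0, he1, hP⟩ := he
    -- step (c)
    have hc : ∀ k : ℕ, mm μ (k+1) ≤ mm ν k + e := by
      intro k
      have hsub : fmExpand M (G (k+1)) e τ ⊆ G k := by
        intro y hy
        simp only [fmExpand, mem_iUnion, exists_prop] at hy
        obtain ⟨x, hx, hxy⟩ := hy
        simp only [fmBall, mem_setOf_eq] at hxy
        simp only [hGdef, mem_setOf_eq] at hx ⊢
        have h1 : M x y t₀ ≥ M x y τ := mono_t hM x y hτ0 hτt₀
        have h2 : 1 - r₀ < M x y t₀ := by
          have : e ≤ r₀ := le_trans heρ (min_le_left _ _)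
          linarith
        have h3 := hmod x y h2
        rw [abs_le] at h3
        have hgy : g x - h ≤ g y := by simp only [hgdef]; linarith [h3.1]
        push_cast at hx ⊢
        linarith
      have h4 := (hP (G (k+1)) (hGmeas (k+1))).1
      have h5 : (ν : Measure X) (fmExpand M (G (k+1)) e τ) ≤ (ν : Measure X) (G k) :=
        measure_mono hsub
      have h6 : (μ : Measure X) (G (k+1)) ≤ (ν : Measure X) (G k) + ENNReal.ofReal e :=
        h4.trans (add_le_add_left h5 _)
      have h7 := ENNReal.toReal_mono (by
        exact ENNReal.add_ne_top.mpr ⟨measure_ne_top _ _, ENNReal.ofReal_ne_top⟩) h6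
      rw [ENNReal.toReal_add (measure_ne_top _ _) ENNReal.ofReal_ne_top,
        ENNReal.toReal_ofReal he0.le] at h7
      exact h7
    -- integrate the pointwise bounds
    have hup : ∫ x, g x ∂(μ : Measure X) ≤ 2*h + ∑ k ∈ Finset.range K, h * mm μ (k+1) := by
      have hintRHS : Integrable (fun x => 2*h + ∑ k ∈ Finset.range K,
          h * (G (k+1)).indicator (fun _ => (1:ℝ)) x) (μ : Measure X) :=
        (integrable_const (2*h)).add (sum_int μ)
      have h1 := integral_mono (g_int μ) hintRHS (fun x => (hpoint x).2)
      have h2 : ∫ x, (2*h + ∑ k ∈ Finset.range K, h * (G (k+1)).indicator (fun _ => (1:ℝ)) x)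
          ∂(μ : Measure X) = 2*h + ∑ k ∈ Finset.range K, h * mm μ (k+1) := by
        have h3 := integral_add (μ := (μ : Measure X)) (integrable_const (2*h)) (sum_int μ)
        simpa [integral_const, sum_repr μ] using h3
      rw [h2] at h1
      exact h1
    have hlo : ∑ k ∈ Finset.range K, h * mm ν (k+1) ≤ ∫ x, g x ∂(ν : Measure X) := by
      have := integral_mono (sum_int ν) (g_int ν) (fun x => (hpoint x).1)
      rwa [sum_repr ν] at this
    have hsum2 : ∑ k ∈ Finset.range K, h * mm μ (k+1)
        ≤ (∑ k ∈ Finset.range K, h * mm ν k) + (K:ℝ) * h * e := by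
      have h1 : ∀ k ∈ Finset.range K, h * mm μ (k+1) ≤ h * mm ν k + h * e := by
        intro k _
        have := hc k
        nlinarith
      calc ∑ k ∈ Finset.range K, h * mm μ (k+1)
          ≤ ∑ k ∈ Finset.range K, (h * mm ν k + h * e) := Finset.sum_le_sum h1
        _ = (∑ k ∈ Finset.range K, h * mm ν k) + (K:ℝ) * h * e := by
            rw [Finset.sum_add_distrib, Finset.sum_const, Finset.card_range]
            push_cast; ring
    have hsum3 : ∑ k ∈ Finset.range K, h * mm ν k
        ≤ h + ∑ k ∈ Finset.range K, h * mm ν (k+1) := by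
      rw [hKdef, Finset.sum_range_succ']
      have h1 : h * mm ν 0 ≤ h := by
        have := hmm1 ν 0; nlinarith
      have h2 : ∑ k ∈ Finset.range Kc, h * mm ν (k+1)
          ≤ ∑ k ∈ Finset.range (Kc+1), h * mm ν (k+1) := by
        apply Finset.sum_le_sum_of_subset_of_nonneg
          (Finset.range_subset_range.mpr (by omega))
        intro k _ _
        have := hmm0 ν (k+1); positivity
      linarith
    have hKhe : (K:ℝ) * h * e ≤ ε/4 := by
      have h1 : (Kc:ℝ) < (2*Cb)/h + 1 := Nat.ceil_lt_add_one (by positivity)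
      have h2 : (K:ℝ) * h ≤ 2*Cb + 2*h := by
        have : (K:ℝ) = (Kc:ℝ) + 1 := by rw [hKdef]; push_cast; ring
        rw [this]
        have h3 : ((Kc:ℝ) + 1) * h < ((2*Cb)/h + 2) * h := by nlinarith
        have h4 : ((2*Cb)/h + 2) * h = 2*Cb + 2*h := by field_simp
        linarith
      have h3 : e ≤ ε/(4*(2*Cb+2*h+1)) := le_trans heρ (min_le_right _ _)
      have h4 : 0 < 2*Cb+2*h+1 := by linarith
      have h5 : (K:ℝ) * h * e ≤ (2*Cb + 2*h) * e := by
        apply mul_le_mul_of_nonneg_right h2 he0.le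
      have h6 : (2*Cb + 2*h) * e ≤ (2*Cb+2*h+1) * (ε/(4*(2*Cb+2*h+1))) := by
        apply mul_le_mul (by linarith) h3 he0.le (by linarith)
      have h7 : (2*Cb+2*h+1) * (ε/(4*(2*Cb+2*h+1))) = ε/4 := by field_simp
      linarith
    have hfinal : ∫ x, g x ∂(μ : Measure X) ≤ ∫ x, g x ∂(ν : Measure X) + ε := by
      have : (2:ℝ)*h + h + ε/4 ≤ ε := by rw [hh]; ring_nf; linarith
      linarith
    rw [g_repr μ, g_repr ν] at hfinal
    linarith
  intro μ ν e τ hτ0 hτt₀ heρ he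
  rw [abs_le]
  constructor
  · have he' : e ∈ prokSet M (ν : Measure X) (μ : Measure X) τ := by
      rw [prokSet_symm]; exact he
    linarith [key ν μ e τ hτ0 hτt₀ heρ he']
  · linarith [key μ ν e τ hτ0 hτt₀ heρ he]

end FPaux

namespace FPaux
variable {X : Type*} {M : X → X → ℝ → ℝ} [TopologicalSpace X]
  [MeasurableSpace X] [BorelSpace X] [CompactSpace X]

lemma prokBall_eq (μ₀ : ProbabilityMeasure X) (r t : ℝ) :
    fmBall (fun (μ ν : ProbabilityMeasure X) (t : ℝ) =>
      fuzzyProkhorov M (μ : Measure X) (ν : Measure X) t) μ₀ r t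
    = {ν : ProbabilityMeasure X |
        sInf (prokSet M (μ₀ : Measure X) (ν : Measure X) t) < r} := by
  ext ν
  simp only [fmBall, fuzzyProkhorov, mem_setOf_eq]
  constructor <;> intro <;> linarith

lemma integral_continuous (f : C(X, ℝ)) :
    Continuous (fun ν' : ProbabilityMeasure X => ∫ x, f x ∂(ν' : Measure X)) :=
  ProbabilityMeasure.continuous_integral_boundedContinuousFunction
    (BoundedContinuousFunction.mkOfCompact f)

lemma prokBall_open (hM : IsFuzzyMetric M luk) (hgen : GeneratesTopology M)
    {μ₀ : ProbabilityMeasure X} {r t : ℝ} (hr0 : 0 < r) (hr1 : r < 1) (ht : 0 < t) :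
    IsOpen {ν : ProbabilityMeasure X |
      sInf (prokSet M (μ₀ : Measure X) (ν : Measure X) t) < r} := by
  rw [isOpen_iff_forall_mem_open]
  intro ν₀ hν₀
  simp only [mem_setOf_eq] at hν₀
  have hne := prokSet_nonempty hM hgen μ₀ ν₀ ht
  obtain ⟨e, heP, her⟩ := (csInf_lt_iff prokSet_bddBelow hne).mp hν₀
  have he0 : 0 < e := heP.1
  set e' : ℝ := (e + r)/2 with he'def
  have hee' : e < e' := by simp only [he'def]; linarith
  have he'r : e' < r := by simp only [he'def]; linarith
  have he'1 : e' < 1 := by linarith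
  obtain ⟨t₀, ht₀0, ht₀t, hULC⟩ := unif_left hM hgen ht (show (0:ℝ) < e' - e by linarith)
  -- e' ∈ prokSet at the smaller time t₀
  have he'₀ : e' ∈ prokSet M (μ₀ : Measure X) (ν₀ : Measure X) t₀ := by
    have hsub : ∀ A : Set X, fmExpand M A e t ⊆ fmExpand M A e' t₀ := by
      intro A y hy
      simp only [fmExpand, mem_iUnion, exists_prop, fmBall, mem_setOf_eq] at hy ⊢
      obtain ⟨a, ha, hay⟩ := hy
      exact ⟨a, ha, by linarith [hULC a y]⟩
    obtain ⟨_, _, hP⟩ := heP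
    refine ⟨by linarith, he'1, fun A hA => ?_⟩
    have hof : ENNReal.ofReal e ≤ ENNReal.ofReal e' := ENNReal.ofReal_le_ofReal hee'.le
    exact ⟨(hP A hA).1.trans (add_le_add (measure_mono (hsub A)) hof),
      (hP A hA).2.trans (add_le_add (measure_mono (hsub A)) hof)⟩
  set ρ : ℝ := (r - e')/2 with hρdef
  have hρ0 : 0 < ρ := by simp only [hρdef]; linarith
  have hρ1 : ρ < 1 := by simp only [hρdef]; linarith
  set τ : ℝ := t - t₀ with hτdef
  have hτ0 : 0 < τ := by simp only [hτdef]; linarith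
  obtain ⟨G, hG⟩ := core hM hgen hτ0 hρ0 hρ1
  refine ⟨{ν' : ProbabilityMeasure X | ∀ f ∈ G,
      |∫ x, f x ∂(ν' : Measure X) - ∫ x, f x ∂(ν₀ : Measure X)| < ρ/2}, ?_, ?_, ?_⟩
  · -- subset of the ball
    intro ν' hν'
    simp only [mem_setOf_eq] at hν' ⊢
    have hρmem : ρ ∈ prokSet M (ν₀ : Measure X) (ν' : Measure X) τ := by
      apply hG ν₀ ν'
      intro f hf
      have := hν' f hf
      rw [abs_sub_comm]
      exact this
    have htri := prokSet_triangle hM hgen ht₀0 hτ0 he'₀ hρmem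
      (show e' + ρ < 1 by simp only [hρdef]; linarith)
    rw [show t₀ + τ = t by simp only [hτdef]; ring] at htri
    have : sInf (prokSet M (μ₀ : Measure X) (ν' : Measure X) t) ≤ e' + ρ :=
      csInf_le prokSet_bddBelow htri
    simp only [hρdef] at this ⊢
    linarith
  · -- openness
    have : {ν' : ProbabilityMeasure X | ∀ f ∈ G,
        |∫ x, f x ∂(ν' : Measure X) - ∫ x, f x ∂(ν₀ : Measure X)| < ρ/2}
        = ⋂ f ∈ G, {ν' : ProbabilityMeasure X |
            |∫ x, f x ∂(ν' : Measure X) - ∫ x, f x ∂(ν₀ : Measure X)| < ρ/2} := by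
      ext ν'; simp
    rw [this]
    apply isOpen_biInter_finset
    intro f hf
    have hcont := integral_continuous (X := X) f
    have : {ν' : ProbabilityMeasure X |
        |∫ x, f x ∂(ν' : Measure X) - ∫ x, f x ∂(ν₀ : Measure X)| < ρ/2}
        = (fun ν' : ProbabilityMeasure X => ∫ x, f x ∂(ν' : Measure X)) ⁻¹'
          (Metric.ball (∫ x, f x ∂(ν₀ : Measure X)) (ρ/2)) := by
      ext ν'; simp [Metric.mem_ball, Real.dist_eq]
    rw [this]
    exact Metric.isOpen_ball.preimage hcont
  · -- ν₀ belongs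
    simp only [mem_setOf_eq]
    intro f hf
    simp only [sub_self, abs_zero]
    linarith

lemma sInf_self_eq_zero (hM : IsFuzzyMetric M luk) (ν : ProbabilityMeasure X)
    {t : ℝ} (ht : 0 < t) : sInf (prokSet M (ν : Measure X) (ν : Measure X) t) = 0 := by
  apply le_antisymm
  · have hsub : Ioo (0:ℝ) 1 ⊆ prokSet M (ν : Measure X) (ν : Measure X) t :=
      fun r hr => mem_prokSet_self hM ht hr.1 hr.2
    calc sInf (prokSet M (ν : Measure X) (ν : Measure X) t) ≤ sInf (Ioo (0:ℝ) 1) :=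
        csInf_le_csInf prokSet_bddBelow (nonempty_Ioo.mpr one_pos) hsub
      _ = 0 := csInf_Ioo one_pos
  · exact le_csInf ⟨1/2, mem_prokSet_self hM ht (by norm_num) (by norm_num)⟩
      (fun r hr => hr.1.le)

lemma nbhd_basis (hM : IsFuzzyMetric M luk) (hgen : GeneratesTopology M)
    (ν : ProbabilityMeasure X) (U : Set (ProbabilityMeasure X)) (hνU : ν ∈ U)
    (hU : IsOpen U) :
    ∃ r t : ℝ, 0 < r ∧ r < 1 ∧ 0 < t ∧
      {ν' : ProbabilityMeasure X |
        sInf (prokSet M (ν : Measure X) (ν' : Measure X) t) < r} ⊆ U := by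
  by_contra hcon
  push_neg at hcon
  have hpick : ∀ n : ℕ, ∃ ν' : ProbabilityMeasure X,
      sInf (prokSet M (ν : Measure X) (ν' : Measure X) (1/(n+2))) < 1/(n+2) ∧ ν' ∉ U := by
    intro n
    have h2 : (0:ℝ) < 1/(n+2) := by positivity
    have h3 : (1:ℝ)/(n+2) < 1 := by
      rw [div_lt_one (by positivity)]
      have : (0:ℝ) ≤ (n:ℝ) := Nat.cast_nonneg n
      linarith
    obtain ⟨ν', hν'mem, hν'U⟩ := not_subset.mp (hcon (1/(n+2)) (1/(n+2)) h2 h3 h2)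
    exact ⟨ν', hν'mem, hν'U⟩
  choose νs hνs hνsU using hpick
  have htend : Tendsto νs atTop (𝓝 ν) := by
    rw [ProbabilityMeasure.tendsto_iff_forall_integral_tendsto]
    intro f
    rw [Metric.tendsto_nhds]
    intro ε hε
    obtain ⟨ρ₀, τ₀, hρ₀0, hτ₀0, hclose⟩ := int_close hM hgen f.toContinuousMap
      (show (0:ℝ) < ε/2 by linarith)
    obtain ⟨N, hN⟩ := exists_nat_one_div_lt (lt_min_iff.mpr ⟨hρ₀0, hτ₀0⟩)
    rw [eventually_atTop]
    refine ⟨N, fun n hn => ?_⟩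
    have hsmall : (1:ℝ)/(n+2) < min ρ₀ τ₀ := by
      refine lt_of_le_of_lt ?_ hN
      apply div_le_div_of_nonneg_left one_pos.le (by positivity)
      push_cast
      have : (N:ℝ) ≤ (n:ℝ) := by exact_mod_cast hn
      linarith
    have h2 : (0:ℝ) < 1/(n+2) := by positivity
    have hne := prokSet_nonempty hM hgen ν (νs n) h2
    obtain ⟨e, heP, helt⟩ := (csInf_lt_iff prokSet_bddBelow hne).mp (hνs n)
    have he_le : e ≤ ρ₀ := le_of_lt (lt_of_lt_of_le (helt.trans hsmall) (min_le_left _ _))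
    have hτle : (1:ℝ)/(n+2) ≤ τ₀ := le_trans hsmall.le (min_le_right _ _)
    have hd := hclose ν (νs n) e (1/(n+2)) h2 hτle he_le heP
    simp only [BoundedContinuousFunction.coe_toContinuousMap] at hd
    rw [Real.dist_eq, abs_sub_comm]
    linarith
  have := htend.eventually_mem (hU.mem_nhds hνU)
  obtain ⟨n, hn⟩ := this.exists
  exact hνsU n hn

end FPaux


/-- weak* convergence implies convergence in the fuzzy Prokhorov metric,
and the topology induced by `M̂` coincides with the weak* topology on `P(X)`. -/
theorem weakStar_implies_fuzzyProkhorov_tendsto {X : Type*} [TopologicalSpace X]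
    [CompactSpace X] [MeasurableSpace X] [BorelSpace X]
    (M : X → X → ℝ → ℝ) (hM : IsFuzzyMetric M luk) (hgen : GeneratesTopology M) :
    (∀ (μs : ℕ → ProbabilityMeasure X) (μ : ProbabilityMeasure X),
      (∀ φ : C(X, ℝ), Filter.Tendsto (fun i => ∫ x, φ x ∂(μs i : Measure X))
        Filter.atTop (nhds (∫ x, φ x ∂(μ : Measure X)))) →
      ∀ t : ℝ, 0 < t → ∀ ε ∈ Ioo (0:ℝ) 1, ∃ N : ℕ, ∀ i ≥ N,
        1 - ε < fuzzyProkhorov M (μs i : Measure X) (μ : Measure X) t) ∧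
    GeneratesTopology
      (fun (μ ν : ProbabilityMeasure X) (t : ℝ) =>
        fuzzyProkhorov M (μ : Measure X) (ν : Measure X) t) := by
  constructor
  · intro μs μ h t ht ε hε
    exact FPaux.part1 hM hgen μs μ h t ht ε hε
  · apply TopologicalSpace.isTopologicalBasis_of_isOpen_of_nhds
    · rintro u ⟨μ₀, r, t, hr0, hr1, ht, rfl⟩
      rw [FPaux.prokBall_eq]
      exact FPaux.prokBall_open hM hgen hr0 hr1 ht
    · intro ν U hνU hU
      obtain ⟨r, t, hr0, hr1, ht, hsub⟩ := FPaux.nbhd_basis hM hgen ν U hνU hU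
      refine ⟨_, ⟨ν, r, t, hr0, hr1, ht, rfl⟩, ?_, ?_⟩
      · simp only [fmBall, mem_setOf_eq, fuzzyProkhorov]
        rw [FPaux.sInf_self_eq_zero hM ν ht]
        linarith
      · rw [FPaux.prokBall_eq]
        exact hsub
end
end

section
/- Let f : X → X' be a nonexpanding map between compact fuzzy metric spaces (X, M, *) and (X', M', *) with the Łukasiewicz t-norm. Then the pushforward map P(f) : P(X) → P(X'), defined by P(f)(μ)(A) = μ(f⁻¹(A)), is nonexpanding with respect to the fuzzy Prokhorov metrics M̂ and M̂'. -/
open Set MeasureTheory Filter Topology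

noncomputable section

set_option linter.unusedSectionVars false
set_option linter.unusedVariables false

section Aux

variable {X : Type*} [TopologicalSpace X] {M : X → X → ℝ → ℝ}

lemma fmBall_isOpen (hgen : GeneratesTopology M) (x : X) {r t : ℝ}
    (hr0 : 0 < r) (hr1 : r < 1) (ht : 0 < t) : IsOpen (fmBall M x r t) :=
  hgen.isOpen ⟨x, r, t, hr0, hr1, ht, rfl⟩

lemma mem_fmBall_self (hM : IsFuzzyMetric M luk) (x : X) {r t : ℝ}
    (hr0 : 0 < r) (ht : 0 < t) : x ∈ fmBall M x r t := by
  have := (hM.eq_one_iff x x t ht).mpr rfl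
  simp only [fmBall, mem_setOf_eq, this]
  linarith

lemma tri3 (hM : IsFuzzyMetric M luk) (x y z w : X) {t1 t2 t3 : ℝ}
    (h1 : 0 < t1) (h2 : 0 < t2) (h3 : 0 < t3) :
    M x y t1 + M y z t2 + M z w t3 - 2 ≤ M x w (t1 + t2 + t3) := by
  have A := hM.triangle x y z t1 t2 h1 h2
  have B := hM.triangle x z w (t1 + t2) t3 (by linarith) h3
  have hA : M x y t1 + M y z t2 - 1 ≤ M x z (t1 + t2) :=
    le_trans (le_max_left _ _) A
  have hB : M x z (t1 + t2) + M z w t3 - 1 ≤ M x w (t1 + t2 + t3) :=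
    le_trans (le_max_left _ _) B
  linarith

lemma lt_set_isOpen (hM : IsFuzzyMetric M luk) (hgen : GeneratesTopology M)
    {c t : ℝ} (hc0 : 0 < c) (hc1 : c < 1) (ht : 0 < t) :
    IsOpen {p : X × X | c < M p.1 p.2 t} := by
  rw [isOpen_iff_forall_mem_open]
  rintro ⟨x₀, y₀⟩ hp
  simp only [mem_setOf_eq] at hp
  set c' : ℝ := (c + M x₀ y₀ t) / 2 with hc'
  have hcc' : c < c' := by simp only [hc']; linarith
  have hc'M : c' < M x₀ y₀ t := by simp only [hc']; linarith
  -- find t₁ < t with c' < M x₀ y₀ t₁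
  have hcont : ContinuousAt (fun s => M x₀ y₀ s) t :=
    (hM.continuousOn x₀ y₀).continuousAt (Ioi_mem_nhds ht)
  have hev : ∀ᶠ s in 𝓝 t, c' < M x₀ y₀ s := hcont.eventually (eventually_gt_nhds hc'M)
  have hev0 : ∀ᶠ s in 𝓝 t, (0:ℝ) < s := eventually_gt_nhds ht
  have hev2 : ∀ᶠ s in 𝓝[<] t, c' < M x₀ y₀ s ∧ (0:ℝ) < s :=
    ((hev.and hev0).filter_mono nhdsWithin_le_nhds)
  have hev3 : ∀ᶠ s in 𝓝[<] t, (c' < M x₀ y₀ s ∧ (0:ℝ) < s) ∧ s < t :=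
    hev2.and (eventually_mem_nhdsWithin)
  obtain ⟨t₁, ⟨ht₁M, ht₁0⟩, ht₁t⟩ := hev3.exists
  set s : ℝ := (t - t₁) / 2 with hs
  have hs0 : 0 < s := by simp only [hs]; linarith
  set δ : ℝ := min ((c' - c) / 2) (1 / 2) with hδ
  have hδ0 : 0 < δ := lt_min (by linarith) (by norm_num)
  have hδ1 : δ < 1 := lt_of_le_of_lt (min_le_right _ _) (by norm_num)
  have h2δ : 2 * δ ≤ c' - c := by
    have := min_le_left ((c' - c) / 2) (1 / 2)
    simp only [hδ]; linarith [this]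
  refine ⟨fmBall M x₀ δ s ×ˢ fmBall M y₀ δ s, ?_, ?_, ?_⟩
  · rintro ⟨x, y⟩ ⟨hx, hy⟩
    simp only [fmBall, mem_setOf_eq] at hx hy
    have hxx : 1 - δ < M x x₀ s := by rwa [hM.symm x x₀ s hs0]
    have htri := tri3 hM x x₀ y₀ y hs0 ht₁0 hs0
    have hteq : s + t₁ + s = t := by simp only [hs]; ring
    rw [hteq] at htri
    simp only [mem_setOf_eq]
    calc c ≤ c' - 2 * δ := by linarith
    _ = (1 - δ) + c' + (1 - δ) - 2 := by ring
    _ < M x x₀ s + M x₀ y₀ t₁ + M y₀ y s - 2 := by linarith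
    _ ≤ M x y t := htri
  · exact (fmBall_isOpen hgen x₀ hδ0 hδ1 hs0).prod (fmBall_isOpen hgen y₀ hδ0 hδ1 hs0)
  · exact ⟨mem_fmBall_self hM x₀ hδ0 hs0, mem_fmBall_self hM y₀ hδ0 hs0⟩

lemma exists_uniform_lb [CompactSpace X] (hM : IsFuzzyMetric M luk)
    (hgen : GeneratesTopology M) {t : ℝ} (ht : 0 < t) :
    ∃ c : ℝ, 0 < c ∧ c < 1 ∧ ∀ x y : X, c < M x y t := by
  set U : ℕ → Set (X × X) := fun n => {p | 1 / (n + 2 : ℝ) < M p.1 p.2 t} with hU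
  have hc0 : ∀ n : ℕ, (0:ℝ) < 1 / (n + 2 : ℝ) := by
    intro n; positivity
  have hc1 : ∀ n : ℕ, (1 / (n + 2 : ℝ)) < 1 := by
    intro n
    rw [div_lt_one (by positivity)]
    have : (0:ℝ) ≤ (n:ℝ) := Nat.cast_nonneg n
    linarith
  have hopen : ∀ n, IsOpen (U n) := fun n =>
    lt_set_isOpen hM hgen (hc0 n) (hc1 n) ht
  have hcover : (univ : Set (X × X)) ⊆ ⋃ n, U n := by
    rintro ⟨x, y⟩ -
    have hpos := hM.pos x y t ht
    obtain ⟨n, hn⟩ := exists_nat_one_div_lt hpos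
    refine mem_iUnion.mpr ⟨n, ?_⟩
    simp only [hU, mem_setOf_eq]
    calc 1 / (n + 2 : ℝ) ≤ 1 / (n + 1 : ℝ) := by
          apply one_div_le_one_div_of_le (by positivity); linarith
    _ < M x y t := hn
  obtain ⟨F, hF⟩ := isCompact_univ.elim_finite_subcover U hopen hcover
  set N : ℕ := F.sup id with hN
  refine ⟨1 / (N + 2 : ℝ), hc0 N, hc1 N, ?_⟩
  intro x y
  have hxy : (⟨x, y⟩ : X × X) ∈ ⋃ i ∈ F, U i := hF (mem_univ _)
  obtain ⟨i, hiF, hi⟩ := mem_iUnion₂.mp hxy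
  simp only [hU, mem_setOf_eq] at hi
  have hiN : i ≤ N := Finset.le_sup (f := id) hiF
  calc 1 / (N + 2 : ℝ) ≤ 1 / (i + 2 : ℝ) := by
        apply one_div_le_one_div_of_le (by positivity)
        have := (Nat.cast_le (α := ℝ)).mpr hiN
        linarith
  _ < M x y t := hi

end Aux


lemma prokSet_nonempty {X : Type*} [TopologicalSpace X] [CompactSpace X]
    [MeasurableSpace X] {M : X → X → ℝ → ℝ}
    (hM : IsFuzzyMetric M luk) (hgen : GeneratesTopology M)
    (μ ν : Measure X) [IsProbabilityMeasure μ] [IsProbabilityMeasure ν]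
    {t : ℝ} (ht : 0 < t) : (prokSet M μ ν t).Nonempty := by
  obtain ⟨c, hc0, hc1, hc⟩ := exists_uniform_lb hM hgen ht
  refine ⟨1 - c, by linarith, by linarith, ?_⟩
  intro A hA
  rcases A.eq_empty_or_nonempty with rfl | ⟨a, ha⟩
  · simp [fmExpand]
  · have hexp : ∀ (ρ : Measure X) [IsProbabilityMeasure ρ] (σ : Measure X)
        [IsProbabilityMeasure σ],
        ρ A ≤ σ (fmExpand M A (1 - c) t) + ENNReal.ofReal (1 - c) := by
      intro ρ _ σ _
      have huniv : (univ : Set X) ⊆ fmExpand M A (1 - c) t := by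
        intro y _
        refine mem_iUnion₂.mpr ⟨a, ha, ?_⟩
        simp only [fmBall, mem_setOf_eq]
        have := hc a y
        linarith
      calc ρ A ≤ ρ univ := measure_mono (subset_univ A)
      _ = 1 := measure_univ
      _ = σ univ := measure_univ.symm
      _ ≤ σ (fmExpand M A (1 - c) t) := measure_mono huniv
      _ ≤ _ := le_add_right le_rfl
    exact ⟨hexp μ ν, hexp ν μ⟩

/-- the pushforward of measures along a nonexpanding map is nonexpanding
with respect to the fuzzy Prokhorov metrics. -/
theorem fuzzyProkhorov_map_nonexpanding {X X' : Type*}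
    [TopologicalSpace X] [CompactSpace X] [MeasurableSpace X] [BorelSpace X]
    [TopologicalSpace X'] [CompactSpace X'] [MeasurableSpace X'] [BorelSpace X']
    (M : X → X → ℝ → ℝ) (M' : X' → X' → ℝ → ℝ)
    (hM : IsFuzzyMetric M luk) (hM' : IsFuzzyMetric M' luk)
    (hgen : GeneratesTopology M) (hgen' : GeneratesTopology M')
    (f : X → X') (hf : Measurable f)
    (hne : ∀ x y : X, ∀ t : ℝ, 0 < t → M x y t ≤ M' (f x) (f y) t)
    (μ ν : ProbabilityMeasure X) (t : ℝ) (ht : 0 < t) :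
    fuzzyProkhorov M (μ : Measure X) (ν : Measure X) t ≤
      fuzzyProkhorov M' (Measure.map f (μ : Measure X))
        (Measure.map f (ν : Measure X)) t := by
  unfold fuzzyProkhorov
  apply sub_le_sub_left
  apply csInf_le_csInf
  · exact ⟨0, fun r hr => le_of_lt hr.1⟩
  · exact prokSet_nonempty hM hgen _ _ ht
  · rintro r ⟨hr0, hr1, hr⟩
    refine ⟨hr0, hr1, ?_⟩
    intro A hA
    have hopen : IsOpen (fmExpand M' A r t) :=
      isOpen_biUnion fun x _ => fmBall_isOpen hgen' x hr0 hr1 ht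
    have hmes : MeasurableSet (fmExpand M' A r t) := hopen.measurableSet
    have hpre : fmExpand M (f ⁻¹' A) r t ⊆ f ⁻¹' (fmExpand M' A r t) := by
      intro y hy
      obtain ⟨x, hxA, hxy⟩ := mem_iUnion₂.mp hy
      simp only [fmBall, mem_setOf_eq] at hxy
      refine mem_iUnion₂.mpr ⟨f x, hxA, ?_⟩
      simp only [fmBall, mem_setOf_eq]
      exact lt_of_lt_of_le hxy (hne x y t ht)
    obtain ⟨h1, h2⟩ := hr (f ⁻¹' A) (hf hA)
    rw [Measure.map_apply hf hA, Measure.map_apply hf hA,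
        Measure.map_apply hf hmes, Measure.map_apply hf hmes]
    constructor
    · calc (μ : Measure X) (f ⁻¹' A)
          ≤ (ν : Measure X) (fmExpand M (f ⁻¹' A) r t) + ENNReal.ofReal r := h1
      _ ≤ (ν : Measure X) (f ⁻¹' (fmExpand M' A r t)) + ENNReal.ofReal r :=
          add_le_add_left (measure_mono hpre) _
    · calc (ν : Measure X) (f ⁻¹' A)
          ≤ (μ : Measure X) (fmExpand M (f ⁻¹' A) r t) + ENNReal.ofReal r := h2
      _ ≤ (μ : Measure X) (f ⁻¹' (fmExpand M' A r t)) + ENNReal.ofReal r :=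
          add_le_add_left (measure_mono hpre) _
end
end

section
/- Let (X, M, *) be a compact fuzzy metric space with the Łukasiewicz t-norm. The map x ↦ δ_x from X to P(X) (with Dirac measures) is an isometric embedding: M̂(δ_x, δ_y, t) = M(x, y, t) for all x, y ∈ X and t > 0. -/
open Set MeasureTheory Filter Topology

noncomputable section

lemma ball_open {X : Type*} [TopologicalSpace X] (M : X → X → ℝ → ℝ)
    (hgen : GeneratesTopology M) {x : X} {r t : ℝ} (hr : 0 < r) (hr1 : r < 1) (ht : 0 < t) :
    IsOpen (fmBall M x r t) :=
  hgen.isOpen ⟨x, r, t, hr, hr1, ht, rfl⟩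

lemma singleton_meas {X : Type*} [TopologicalSpace X] [MeasurableSpace X] [BorelSpace X]
    (M : X → X → ℝ → ℝ) (hM : IsFuzzyMetric M luk) (hgen : GeneratesTopology M) (x : X) :
    MeasurableSet ({x} : Set X) := by
  have hopen : IsOpen ({x}ᶜ : Set X) := by
    rw [isOpen_iff_forall_mem_open]
    intro z hz
    have hzx : z ≠ x := hz
    have hlt : M z x 1 < 1 :=
      lt_of_le_of_ne (hM.le_one z x 1 one_pos) (fun h => hzx ((hM.eq_one_iff z x 1 one_pos).mp h))
    have hpos : 0 < M z x 1 := hM.pos z x 1 one_pos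
    refine ⟨fmBall M z (1 - M z x 1) 1, ?_, ball_open M hgen (by linarith) (by linarith) one_pos, ?_⟩
    · intro w hw hwx
      have : (1:ℝ) - (1 - M z x 1) < M z w 1 := hw
      rw [show w = x from hwx] at this
      linarith
    · show (1:ℝ) - (1 - M z x 1) < M z z 1
      rw [(hM.eq_one_iff z z 1 one_pos).mpr rfl]; linarith
  exact (isOpen_compl_iff.mp hopen).measurableSet

/-- `x ↦ δ_x` is an isometric embedding of `X` into `P(X)`. -/
theorem fuzzyProkhorov_dirac {X : Type*} [TopologicalSpace X] [CompactSpace X]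
    [MeasurableSpace X] [BorelSpace X]
    (M : X → X → ℝ → ℝ) (hM : IsFuzzyMetric M luk) (hgen : GeneratesTopology M)
    (x y : X) (t : ℝ) (ht : 0 < t) :
    fuzzyProkhorov M (Measure.dirac x) (Measure.dirac y) t = M x y t := by
  set m := M x y t with hm
  have hmpos : 0 < m := hM.pos x y t ht
  have hmle : m ≤ 1 := hM.le_one x y t ht
  have hset : prokSet M (Measure.dirac x) (Measure.dirac y) t = Ioo (1 - m) 1 := by
    ext r
    constructor
    · rintro ⟨hr0, hr1, hA⟩
      refine ⟨?_, hr1⟩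
      have hx : MeasurableSet ({x} : Set X) := singleton_meas M hM hgen x
      obtain ⟨h1, -⟩ := hA {x} hx
      have hexp : fmExpand M {x} r t = fmBall M x r t := by
        simp [fmExpand]
      rw [hexp] at h1
      have hdx : Measure.dirac x ({x} : Set X) = 1 := Measure.dirac_apply_of_mem rfl
      rw [hdx] at h1
      by_contra hc
      push_neg at hc
      have hynot : y ∉ fmBall M x r t := by
        intro hy
        have : (1:ℝ) - r < m := hy
        linarith
      have hball : MeasurableSet (fmBall M x r t) :=
        (ball_open M hgen hr0 hr1 ht).measurableSet
      have : Measure.dirac y (fmBall M x r t) = 0 := by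
        rw [Measure.dirac_apply' _ hball, Set.indicator_of_notMem hynot]
      rw [this, zero_add] at h1
      exact absurd (lt_of_le_of_lt h1 (ENNReal.ofReal_lt_one.mpr hr1)) (lt_irrefl _)
    · rintro ⟨h1, hr1⟩
      have hr0 : 0 < r := lt_of_le_of_lt (by linarith) h1
      refine ⟨hr0, hr1, fun A hA => ?_⟩
      constructor
      · by_cases hxA : x ∈ A
        · have hy : y ∈ fmExpand M A r t := by
            refine Set.mem_biUnion hxA ?_
            show (1:ℝ) - r < m
            linarith
          rw [Measure.dirac_apply_of_mem hy]
          calc Measure.dirac x A ≤ 1 := prob_le_one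
            _ ≤ 1 + ENNReal.ofReal r := le_self_add
        · rw [Measure.dirac_apply' _ hA, Set.indicator_of_notMem hxA]
          exact zero_le'
      · by_cases hyA : y ∈ A
        · have hx : x ∈ fmExpand M A r t := by
            refine Set.mem_biUnion hyA ?_
            show (1:ℝ) - r < M y x t
            rw [← hM.symm x y t ht]
            linarith
          rw [Measure.dirac_apply_of_mem hx]
          calc Measure.dirac y A ≤ 1 := prob_le_one
            _ ≤ 1 + ENNReal.ofReal r := le_self_add
        · rw [Measure.dirac_apply' _ hA, Set.indicator_of_notMem hyA]
          exact zero_le'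
  rw [fuzzyProkhorov, hset, csInf_Ioo (by linarith)]
  ring
end
end

section
/- Let Y be a nonempty closed subset of a compact metrizable space X, and let M be a fuzzy metric on Y (with the Łukasiewicz t-norm) inducing the subspace topology. Then there exists a fuzzy metric M' on X (with the Łukasiewicz t-norm) inducing the topology of X such that M' restricted to Y × Y × (0,∞) equals M. -/
open Set MeasureTheory Filter Topology

noncomputable section

set_option linter.unusedSectionVars false

section Aux

variable {E : Type*} [MetricSpace E] {Z : Set E} (M : Z → Z → ℝ → ℝ)

/-- triangle in defect form -/
lemma fm_tri (hM : IsFuzzyMetric M luk) (a b c : Z) {t s : ℝ} (ht : 0 < t) (hs : 0 < s) :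
    M a b t + M b c s - 1 ≤ M a c (t + s) :=
  le_trans (le_max_left _ _) (hM.triangle a b c t s ht hs)

/-- monotone in t -/
lemma fm_mono (hM : IsFuzzyMetric M luk) (a b : Z) {t t' : ℝ} (ht : 0 < t) (htt : t ≤ t') :
    M a b t ≤ M a b t' := by
  rcases eq_or_lt_of_le htt with rfl | h
  · exact le_refl _
  · have h1 : M b b (t' - t) = 1 := (hM.eq_one_iff b b _ (by linarith)).2 rfl
    have h0 := fm_tri M hM a b b ht (by linarith : (0:ℝ) < t' - t)
    rw [h1] at h0
    have h2 : t + (t' - t) = t' := by ring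
    rw [h2] at h0; linarith

/-- 3-fold triangle -/
lemma fm_tri3 (hM : IsFuzzyMetric M luk) (a b c d : Z) {t1 t2 t3 : ℝ}
    (h1 : 0 < t1) (h2 : 0 < t2) (h3 : 0 < t3) :
    M a b t1 + M b c t2 + M c d t3 - 2 ≤ M a d (t1 + t2 + t3) := by
  have A := fm_tri M hM a b c h1 h2
  have B := fm_tri M hM a c d (t := t1 + t2) (s := t3) (by linarith) h3
  linarith

end Aux
section Aux2

variable {E : Type*} [MetricSpace E] {Z : Set E} (M : Z → Z → ℝ → ℝ)

lemma ball_isOpen (hgen : GeneratesTopology M) {x : Z} {r t : ℝ}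
    (hr0 : 0 < r) (hr1 : r < 1) (ht : 0 < t) : IsOpen (fmBall M x r t) :=
  hgen.isOpen ⟨x, r, t, hr0, hr1, ht, rfl⟩

lemma mem_ball_self (hM : IsFuzzyMetric M luk) {x : Z} {r t : ℝ}
    (hr0 : 0 < r) (ht : 0 < t) : x ∈ fmBall M x r t := by
  have : M x x t = 1 := (hM.eq_one_iff x x t ht).2 rfl
  simp only [fmBall, Set.mem_setOf_eq, this]; linarith

/-- joint continuity of a fuzzy metric generating the topology -/
lemma fm_jointCont (hM : IsFuzzyMetric M luk) (hgen : GeneratesTopology M) :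
    ContinuousOn (fun p : (Z × Z) × ℝ => M p.1.1 p.1.2 p.2)
      ((Set.univ : Set (Z × Z)) ×ˢ Ioi (0:ℝ)) := by
  rintro ⟨⟨a, b⟩, t⟩ ⟨-, ht⟩
  simp only [Set.mem_prod, Set.mem_Ioi] at ht
  rw [ContinuousWithinAt, Metric.tendsto_nhds]
  intro ε hε
  have hcont := hM.continuousOn a b t ht
  rw [Metric.continuousWithinAt_iff] at hcont
  obtain ⟨δ, hδ0, hδ⟩ := hcont (ε/4) (by linarith)
  set s : ℝ := min (t/4) (δ/4) with hs_def
  have hs0 : 0 < s := lt_min (by linarith) (by linarith)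
  have hst : s ≤ t/4 := min_le_left _ _
  have hsδ : s ≤ δ/4 := min_le_right _ _
  have htm : (0:ℝ) < t - 3*s := by linarith
  have htm' : t - 3*s ∈ Ioi (0:ℝ) := htm
  have habm : |M a b (t - 3*s) - M a b t| < ε/4 := by
    have := hδ htm' (by rw [Real.dist_eq]; rw [abs_of_nonpos (by linarith)]; linarith)
    rwa [Real.dist_eq] at this
  have habp : |M a b (t + 3*s) - M a b t| < ε/4 := by
    have := hδ (x := t + 3*s) (by simp only [Set.mem_Ioi]; linarith) (by rw [Real.dist_eq, abs_of_nonneg (by linarith : (0:ℝ) ≤ t + 3*s - t)]; linarith)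
    rwa [Real.dist_eq] at this
  set ε' : ℝ := min (ε/8) (1/2) with hε'_def
  have hε'0 : 0 < ε' := lt_min (by linarith) (by norm_num)
  have hε'1 : ε' < 1 := lt_of_le_of_lt (min_le_right _ _) (by norm_num)
  have hε'ε : ε' ≤ ε/8 := min_le_left _ _
  set U : Set ((Z × Z) × ℝ) :=
    (fmBall M a ε' s ×ˢ fmBall M b ε' s) ×ˢ Ioo (t - s) (t + s) with hU_def
  have hUopen : IsOpen U :=
    ((ball_isOpen M hgen hε'0 hε'1 hs0).prod (ball_isOpen M hgen hε'0 hε'1 hs0)).prod isOpen_Ioo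
  have hUmem : ((a, b), t) ∈ U := by
    refine ⟨⟨mem_ball_self M hM hε'0 hs0, mem_ball_self M hM hε'0 hs0⟩, ?_, ?_⟩ <;> ·
      simp only []; linarith
  filter_upwards [mem_nhdsWithin_of_mem_nhds (hUopen.mem_nhds hUmem), self_mem_nhdsWithin]
  rintro ⟨⟨a', b'⟩, t'⟩ ⟨⟨ha', hb'⟩, ht'l, ht'r⟩ ⟨-, ht'0⟩
  simp only [fmBall, Set.mem_setOf_eq] at ha' hb'
  simp only [Set.mem_Ioi] at ht'0
  have hMaa' : 1 - ε' < M a a' s := ha'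
  have hMbb' : 1 - ε' < M b b' s := hb'
  have hsym1 : M a' a s = M a a' s := hM.symm a' a s hs0
  have hsym2 : M b' b s = M b b' s := hM.symm b' b s hs0
  -- lower bound
  have hlow : M a b t - ε/2 ≤ M a' b' t' := by
    have h1 : M a' b' (t - s) ≤ M a' b' t' := fm_mono M hM a' b' (by linarith) (by linarith)
    have h2 := fm_tri3 M hM a' a b b' (t1 := s) (t2 := t - 3*s) (t3 := s) hs0 htm hs0
    have h3 : s + (t - 3*s) + s = t - s := by ring
    rw [h3] at h2
    have h4 : M a b t - ε/4 ≤ M a b (t - 3*s) := by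
      have := abs_lt.1 habm; linarith [this.1]
    rw [hsym1] at h2
    nlinarith [hM.le_one a b (t - 3*s) htm]
  -- upper bound
  have hhigh : M a' b' t' ≤ M a b t + ε/2 := by
    have h1 : M a' b' t' ≤ M a' b' (t + s) := fm_mono M hM a' b' ht'0 (by linarith)
    have h2 := fm_tri3 M hM a a' b' b (t1 := s) (t2 := t + s) (t3 := s) hs0 (by linarith) hs0
    have h3 : s + (t + s) + s = t + 3*s := by ring
    rw [h3] at h2
    have h4 : M a b (t + 3*s) ≤ M a b t + ε/4 := by
      have := abs_lt.1 habp; linarith [this.2]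
    rw [hsym2] at h2
    nlinarith [hM.le_one a' b' (t+s) (by linarith : (0:ℝ) < t + s)]
  rw [Real.dist_eq, abs_lt]
  constructor <;> linarith

end Aux2
section Aux3

variable {E : Type*} [MetricSpace E] {Z : Set E}

/-- the set of admissible values for the modulus majorant -/
def gset (M : Z → Z → ℝ → ℝ) (s t : ℝ) : Set ℝ :=
  {v : ℝ | ∃ ε φ : ℝ, 0 < ε ∧ 0 < φ ∧
    (∀ a b : Z, dist (a : E) (b : E) ≤ φ → 1 - M a b t ≤ ε) ∧ v = ε + s / φ}

/-- the subadditive modulus majorant -/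
def gdef (M : Z → Z → ℝ → ℝ) (s t : ℝ) : ℝ := sInf (gset M s t)

variable (M : Z → Z → ℝ → ℝ)

lemma gset_nonempty (hM : IsFuzzyMetric M luk) {t : ℝ} (ht : 0 < t) (s : ℝ) :
    (gset M s t).Nonempty := by
  refine ⟨1 + s / 1, 1, 1, one_pos, one_pos, fun a b _ => ?_, rfl⟩
  linarith [hM.pos a b t ht]

lemma gset_bddBelow {s t : ℝ} (hs : 0 ≤ s) : BddBelow (gset M s t) := by
  refine ⟨0, fun v hv => ?_⟩
  obtain ⟨ε, φ, hε, hφ, -, rfl⟩ := hv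
  positivity

lemma gdef_nonneg (hM : IsFuzzyMetric M luk) {s t : ℝ} (hs : 0 ≤ s) (ht : 0 < t) :
    0 ≤ gdef M s t :=
  le_csInf (gset_nonempty M hM ht s) (fun v hv => by
    obtain ⟨ε, φ, hε, hφ, -, rfl⟩ := hv; positivity)

lemma gdef_le_pair {s t ε φ : ℝ} (hs : 0 ≤ s) (hε : 0 < ε) (hφ : 0 < φ)
    (hv : ∀ a b : Z, dist (a : E) (b : E) ≤ φ → 1 - M a b t ≤ ε) :
    gdef M s t ≤ ε + s / φ :=
  csInf_le (gset_bddBelow M hs) ⟨ε, φ, hε, hφ, hv, rfl⟩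

lemma gdef_ge (hM : IsFuzzyMetric M luk) {s t : ℝ} (ht : 0 < t)
    (a b : Z) (hab : dist (a : E) (b : E) ≤ s) :
    1 - M a b t ≤ gdef M s t := by
  refine le_csInf (gset_nonempty M hM ht s) (fun v hv => ?_)
  obtain ⟨ε, φ, hε, hφ, hval, rfl⟩ := hv
  rcases le_or_gt s φ with h | h
  · have h0 : (0:ℝ) ≤ s / φ := div_nonneg (le_trans dist_nonneg hab) hφ.le
    linarith [hval a b (le_trans hab h)]
  · have h1 : (1:ℝ) ≤ s / φ := (one_le_div hφ).2 h.le
    linarith [hM.pos a b t ht]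

lemma gdef_mono_s (hM : IsFuzzyMetric M luk) {s s' t : ℝ} (hs : 0 ≤ s) (ht : 0 < t)
    (h : s ≤ s') : gdef M s t ≤ gdef M s' t := by
  refine le_csInf (gset_nonempty M hM ht s') (fun v hv => ?_)
  obtain ⟨ε, φ, hε, hφ, hval, rfl⟩ := hv
  calc gdef M s t ≤ ε + s / φ := gdef_le_pair M hs hε hφ hval
    _ ≤ ε + s' / φ := by gcongr

lemma gdef_anti_t (hM : IsFuzzyMetric M luk) {s t t' : ℝ} (hs : 0 ≤ s) (ht : 0 < t)
    (h : t ≤ t') : gdef M s t' ≤ gdef M s t := by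
  refine le_csInf (gset_nonempty M hM ht s) (fun v hv => ?_)
  obtain ⟨ε, φ, hε, hφ, hval, rfl⟩ := hv
  refine gdef_le_pair M hs hε hφ (fun a b hab => ?_)
  linarith [hval a b hab, fm_mono M hM a b ht h]

/-- mixed subadditivity -/
lemma gdef_subadd (hM : IsFuzzyMetric M luk) {s1 s2 t1 t2 : ℝ}
    (hs1 : 0 ≤ s1) (hs2 : 0 ≤ s2) (ht1 : 0 < t1) (ht2 : 0 < t2) :
    gdef M (s1 + s2) (t1 + t2) ≤ gdef M s1 t1 + gdef M s2 t2 := by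
  have key : ∀ v1 ∈ gset M s1 t1, ∀ v2 ∈ gset M s2 t2,
      gdef M (s1 + s2) (t1 + t2) ≤ v1 + v2 := by
    rintro v1 ⟨ε1, φ1, hε1, hφ1, hval1, rfl⟩ v2 ⟨ε2, φ2, hε2, hφ2, hval2, rfl⟩
    rcases le_total φ2 φ1 with h | h
    · have hval : ∀ a b : Z, dist (a : E) (b : E) ≤ φ1 → 1 - M a b (t1 + t2) ≤ ε1 + ε2 := by
        intro a b hab
        have := hval1 a b hab
        have hm := fm_mono M hM a b ht1 (by linarith : t1 ≤ t1 + t2)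
        linarith
      calc gdef M (s1 + s2) (t1 + t2) ≤ (ε1 + ε2) + (s1 + s2) / φ1 :=
            gdef_le_pair M (by linarith) (by linarith) hφ1 hval
        _ ≤ ε1 + s1 / φ1 + (ε2 + s2 / φ2) := by
            rw [add_div]
            have : s2 / φ1 ≤ s2 / φ2 := by gcongr
            linarith
    · have hval : ∀ a b : Z, dist (a : E) (b : E) ≤ φ2 → 1 - M a b (t1 + t2) ≤ ε1 + ε2 := by
        intro a b hab
        have := hval2 a b hab
        have hm := fm_mono M hM a b ht2 (by linarith : t2 ≤ t1 + t2)
        linarith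
      calc gdef M (s1 + s2) (t1 + t2) ≤ (ε1 + ε2) + (s1 + s2) / φ2 :=
            gdef_le_pair M (by linarith) (by linarith) hφ2 hval
        _ ≤ ε1 + s1 / φ1 + (ε2 + s2 / φ2) := by
            rw [add_div]
            have : s1 / φ2 ≤ s1 / φ1 := by gcongr
            linarith
  have h2 : ∀ v1 ∈ gset M s1 t1, gdef M (s1 + s2) (t1 + t2) - v1 ≤ gdef M s2 t2 :=
    fun v1 hv1 => le_csInf (gset_nonempty M hM ht2 s2)
      (fun v2 hv2 => by linarith [key v1 hv1 v2 hv2])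
  have h3 : gdef M (s1 + s2) (t1 + t2) - gdef M s2 t2 ≤ gdef M s1 t1 :=
    le_csInf (gset_nonempty M hM ht1 s1) (fun v1 hv1 => by linarith [h2 v1 hv1])
  linarith

/-- same-t subadditivity -/
lemma gdef_subadd_s (hM : IsFuzzyMetric M luk) {s1 s2 t : ℝ}
    (hs1 : 0 ≤ s1) (hs2 : 0 ≤ s2) (ht : 0 < t) :
    gdef M (s1 + s2) t ≤ gdef M s1 t + gdef M s2 t := by
  have key : ∀ v1 ∈ gset M s1 t, ∀ v2 ∈ gset M s2 t,
      gdef M (s1 + s2) t ≤ v1 + v2 := by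
    rintro v1 ⟨ε1, φ1, hε1, hφ1, hval1, rfl⟩ v2 ⟨ε2, φ2, hε2, hφ2, hval2, rfl⟩
    rcases le_total φ2 φ1 with h | h
    · have hval : ∀ a b : Z, dist (a : E) (b : E) ≤ φ1 → 1 - M a b t ≤ ε1 + ε2 :=
        fun a b hab => by linarith [hval1 a b hab]
      calc gdef M (s1 + s2) t ≤ (ε1 + ε2) + (s1 + s2) / φ1 :=
            gdef_le_pair M (by linarith) (by linarith) hφ1 hval
        _ ≤ ε1 + s1 / φ1 + (ε2 + s2 / φ2) := by
            rw [add_div]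
            have : s2 / φ1 ≤ s2 / φ2 := by gcongr
            linarith
    · have hval : ∀ a b : Z, dist (a : E) (b : E) ≤ φ2 → 1 - M a b t ≤ ε1 + ε2 :=
        fun a b hab => by linarith [hval2 a b hab]
      calc gdef M (s1 + s2) t ≤ (ε1 + ε2) + (s1 + s2) / φ2 :=
            gdef_le_pair M (by linarith) (by linarith) hφ2 hval
        _ ≤ ε1 + s1 / φ1 + (ε2 + s2 / φ2) := by
            rw [add_div]
            have : s1 / φ2 ≤ s1 / φ1 := by gcongr
            linarith
  have h2 : ∀ v1 ∈ gset M s1 t, gdef M (s1 + s2) t - v1 ≤ gdef M s2 t :=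
    fun v1 hv1 => le_csInf (gset_nonempty M hM ht s2)
      (fun v2 hv2 => by linarith [key v1 hv1 v2 hv2])
  have h3 : gdef M (s1 + s2) t - gdef M s2 t ≤ gdef M s1 t :=
    le_csInf (gset_nonempty M hM ht s1) (fun v1 hv1 => by linarith [h2 v1 hv1])
  linarith

end Aux3
section Aux4

variable {E : Type*} [MetricSpace E] {Z : Set E} (M : Z → Z → ℝ → ℝ)

/-- uniform continuity on compact time-slabs -/
lemma fm_ucont [CompactSpace Z] (hM : IsFuzzyMetric M luk) (hgen : GeneratesTopology M)
    {c d : ℝ} (hc : 0 < c) {ε : ℝ} (hε : 0 < ε) :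
    ∃ η > 0, ∀ (a b a' b' : Z) (t t' : ℝ), t ∈ Icc c d → t' ∈ Icc c d →
      dist a a' ≤ η → dist b b' ≤ η → |t - t'| ≤ η →
      |M a b t - M a' b' t'| ≤ ε := by
  have hK : IsCompact ((Set.univ : Set (Z × Z)) ×ˢ Icc c d) :=
    isCompact_univ.prod isCompact_Icc
  have hsub : ((Set.univ : Set (Z × Z)) ×ˢ Icc c d) ⊆ (Set.univ ×ˢ Ioi (0:ℝ)) := by
    rintro ⟨p, t⟩ ⟨-, ht⟩
    exact ⟨trivial, lt_of_lt_of_le hc ht.1⟩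
  have hcont := (fm_jointCont M hM hgen).mono hsub
  have huc := hK.uniformContinuousOn_of_continuous hcont
  rw [Metric.uniformContinuousOn_iff_le] at huc
  obtain ⟨η, hη0, hη⟩ := huc ε hε
  refine ⟨η, hη0, fun a b a' b' t t' htm htm' h1 h2 h3 => ?_⟩
  have := hη ((a, b), t) ⟨trivial, htm⟩ ((a', b'), t') ⟨trivial, htm'⟩ ?_
  · rwa [Real.dist_eq] at this
  · rw [Prod.dist_eq, Prod.dist_eq]
    simp only [Real.dist_eq]
    exact max_le (max_le h1 h2) h3

/-- existence of valid pairs: uniform smallness of the defect near the diagonal -/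
lemma g_valid_exists [CompactSpace Z] (hM : IsFuzzyMetric M luk)
    (hgen : GeneratesTopology M) {t ε : ℝ} (ht : 0 < t) (hε : 0 < ε) :
    ∃ φ > 0, ∀ a b : Z, dist (a : E) (b : E) ≤ φ → 1 - M a b t ≤ ε := by
  obtain ⟨η, hη0, hη⟩ := fm_ucont M hM hgen (c := t) (d := t) ht hε
  refine ⟨η, hη0, fun a b hab => ?_⟩
  have h1 : M b b t = 1 := (hM.eq_one_iff b b t ht).2 rfl
  have := hη a b b b t t ⟨le_refl _, le_refl _⟩ ⟨le_refl _, le_refl _⟩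
    (by rwa [Subtype.dist_eq]) (by simpa using hη0.le) (by simpa using hη0.le)
  rw [h1] at this
  have := abs_le.1 this
  linarith [this.1]

lemma gdef_zero [CompactSpace Z] (hM : IsFuzzyMetric M luk)
    (hgen : GeneratesTopology M) {t : ℝ} (ht : 0 < t) : gdef M 0 t = 0 := by
  refine le_antisymm ?_ (gdef_nonneg M hM (le_refl _) ht)
  refine le_of_forall_pos_le_add (fun ε hε => ?_)
  obtain ⟨φ, hφ0, hφ⟩ := g_valid_exists M hM hgen ht hε
  have := gdef_le_pair M (le_refl (0:ℝ)) hε hφ0 hφ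
  simpa using this

lemma gdef_small [CompactSpace Z] (hM : IsFuzzyMetric M luk)
    (hgen : GeneratesTopology M) {t ε : ℝ} (ht : 0 < t) (hε : 0 < ε) :
    ∃ κ > 0, ∀ σ, 0 ≤ σ → σ ≤ κ → gdef M σ t ≤ ε := by
  obtain ⟨φ, hφ0, hφ⟩ := g_valid_exists M hM hgen ht (half_pos hε)
  refine ⟨φ * (ε/2), by positivity, fun σ hσ0 hσ => ?_⟩
  have h1 := gdef_le_pair M (s := σ) hσ0 (half_pos hε) hφ0 hφ
  have h2 : σ / φ ≤ ε / 2 := by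
    rw [div_le_iff₀ hφ0]; linarith [hσ]
  linarith

/-- strict upper bound below 1 -/
lemma gdef_le_K [CompactSpace Z] [Nonempty Z] (hM : IsFuzzyMetric M luk)
    (hgen : GeneratesTopology M) {t : ℝ} (ht : 0 < t) :
    ∃ K, 0 ≤ K ∧ K < 1 ∧ ∀ s, 0 ≤ s → gdef M s t ≤ K := by
  have hcont : ContinuousOn (fun p : Z × Z => M p.1 p.2 t) Set.univ := by
    have h1 : ContinuousOn (fun p : Z × Z => ((p, t) : (Z × Z) × ℝ)) Set.univ :=
      (continuous_id.prodMk continuous_const).continuousOn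
    exact (fm_jointCont M hM hgen).comp h1
      (fun p _ => ⟨trivial, ht⟩)
  obtain ⟨p0, -, hp0⟩ := isCompact_univ.exists_isMinOn (Set.univ_nonempty) hcont
  set K := 1 - M p0.1 p0.2 t with hK
  refine ⟨K, by linarith [hM.le_one p0.1 p0.2 t ht], by linarith [hM.pos p0.1 p0.2 t ht],
    fun s hs => ?_⟩
  refine le_of_forall_pos_le_add (fun γ hγ => ?_)
  have hval : ∀ a b : Z, dist (a : E) (b : E) ≤ 2*(s+1)/γ → 1 - M a b t ≤ K + γ/2 := by
    intro a b _
    have := hp0 (Set.mem_univ (a, b))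
    simp only [Set.mem_setOf_eq] at this
    have h2 : M p0.1 p0.2 t ≤ M a b t := this
    simp only [hK]; linarith
  have hφpos : (0:ℝ) < 2*(s+1)/γ := div_pos (by linarith) hγ
  have h1 := gdef_le_pair M hs (by simp only [hK]; linarith [hM.le_one p0.1 p0.2 t ht] : (0:ℝ) < K + γ/2) hφpos hval
  have heq : s / (2*(s+1)/γ) = s*γ/(2*(s+1)) := by
    field_simp
  have h2 : s / (2*(s+1)/γ) ≤ γ/2 := by
    rw [heq, div_le_iff₀ (by linarith : (0:ℝ) < 2*(s+1))]
    nlinarith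
  linarith

/-- transfer of the majorant along small time changes (uniform in s) -/
lemma gdef_cont_t [CompactSpace Z] (hM : IsFuzzyMetric M luk)
    (hgen : GeneratesTopology M) {c d ε : ℝ} (hc : 0 < c) (hε : 0 < ε) :
    ∃ η > 0, ∀ u v s, c ≤ u → u ≤ v → v ≤ d → v - u ≤ η → 0 ≤ s →
      gdef M s u ≤ gdef M s v + ε := by
  obtain ⟨η, hη0, hη⟩ := fm_ucont M hM hgen (c := c) (d := max c d) hc (half_pos hε)
  refine ⟨η, hη0, fun u v s hu huv hv hvu hs => ?_⟩
  have hu' : u ∈ Icc c (max c d) := ⟨hu, le_trans (le_trans huv hv) (le_max_right _ _)⟩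
  have hv' : v ∈ Icc c (max c d) := ⟨le_trans hu huv, le_trans hv (le_max_right _ _)⟩
  have key : ∀ w ∈ gset M s v, gdef M s u ≤ w + ε := by
    rintro w ⟨ε1, φ, hε1, hφ, hval, rfl⟩
    have hval' : ∀ a b : Z, dist (a : E) (b : E) ≤ φ → 1 - M a b u ≤ ε1 + ε/2 := by
      intro a b hab
      have h1 := hval a b hab
      have h2 := hη a b a b u v hu' hv' (by simpa using hη0.le) (by simpa using hη0.le)
        (by rw [abs_of_nonpos (by linarith)]; linarith)
      have := abs_le.1 h2
      linarith [this.1]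
    have := gdef_le_pair M hs (by linarith) hφ hval'
    linarith
  have : gdef M s u - ε ≤ gdef M s v :=
    le_csInf (gset_nonempty M hM (lt_of_lt_of_le hc (le_trans hu huv)) s)
      (fun w hw => by linarith [key w hw])
  linarith

end Aux4
section Aux5

variable {E : Type*} [MetricSpace E] {Z : Set E}

/-- the ambient defect function -/
def GdD (M : Z → Z → ℝ → ℝ) (x y : E) (t : ℝ) : ℝ :=
  max (dist x y / (t + dist x y)) (gdef M (dist x y) t)

variable (M : Z → Z → ℝ → ℝ)

lemma GdD_nonneg (hM : IsFuzzyMetric M luk) (x y : E) {t : ℝ} (ht : 0 < t) :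
    0 ≤ GdD M x y t :=
  le_trans (div_nonneg dist_nonneg (by positivity)) (le_max_left _ _)

lemma GdD_symm (x y : E) (t : ℝ) : GdD M x y t = GdD M y x t := by
  simp only [GdD, dist_comm]

lemma GdD_self [CompactSpace Z] (hM : IsFuzzyMetric M luk) (hgen : GeneratesTopology M)
    (x : E) {t : ℝ} (ht : 0 < t) : GdD M x x t = 0 := by
  simp only [GdD, dist_self, zero_div, gdef_zero M hM hgen ht, max_self]

lemma GdD_lt_one [CompactSpace Z] [Nonempty Z] (hM : IsFuzzyMetric M luk)
    (hgen : GeneratesTopology M) (x y : E) {t : ℝ} (ht : 0 < t) : GdD M x y t < 1 := by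
  obtain ⟨K, hK0, hK1, hK⟩ := gdef_le_K M hM hgen ht
  refine max_lt ?_ (lt_of_le_of_lt (hK _ dist_nonneg) hK1)
  rw [div_lt_one (by positivity)]; linarith [dist_nonneg (x := x) (y := y)]

lemma GdD_anti_t (hM : IsFuzzyMetric M luk) (x y : E) {t t' : ℝ} (ht : 0 < t)
    (h : t ≤ t') : GdD M x y t' ≤ GdD M x y t := by
  refine max_le_max ?_ (gdef_anti_t M hM dist_nonneg ht h)
  have hd : (0:ℝ) ≤ dist x y := dist_nonneg
  rw [div_le_div_iff₀ (by linarith) (by linarith)]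
  nlinarith

/-- subadditivity of the standard defect -/
lemma frac_subadd {d12 d23 d13 t s : ℝ} (h12 : 0 ≤ d12) (h23 : 0 ≤ d23)
    (h13 : 0 ≤ d13) (htri : d13 ≤ d12 + d23) (ht : 0 < t) (hs : 0 < s) :
    d13 / (t + s + d13) ≤ d12 / (t + d12) + d23 / (s + d23) := by
  have step1 : d13 / (t + s + d13) ≤ (d12 + d23) / (t + s + (d12 + d23)) := by
    rw [div_le_div_iff₀ (by linarith) (by linarith)]
    nlinarith
  have step2 : (d12 + d23) / (t + s + (d12 + d23)) ≤ d12 / (t + d12) + d23 / (s + d23) := by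
    rw [add_div]
    have e1 : d12 / (t + s + (d12 + d23)) ≤ d12 / (t + d12) := by
      rw [div_le_div_iff₀ (by linarith) (by linarith)]
      nlinarith
    have e2 : d23 / (t + s + (d12 + d23)) ≤ d23 / (s + d23) := by
      rw [div_le_div_iff₀ (by linarith) (by linarith)]
      nlinarith
    linarith
  linarith

lemma GdD_subadd [CompactSpace Z] (hM : IsFuzzyMetric M luk) (x y z : E) {t s : ℝ}
    (ht : 0 < t) (hs : 0 < s) :
    GdD M x z (t + s) ≤ GdD M x y t + GdD M y z s := by
  have hA : dist x z / (t + s + dist x z) ≤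
      dist x y / (t + dist x y) + dist y z / (s + dist y z) :=
    frac_subadd dist_nonneg dist_nonneg dist_nonneg (dist_triangle x y z) ht hs
  have hg : gdef M (dist x z) (t + s) ≤ gdef M (dist x y) t + gdef M (dist y z) s := by
    calc gdef M (dist x z) (t + s) ≤ gdef M (dist x y + dist y z) (t + s) :=
          gdef_mono_s M hM dist_nonneg (by linarith) (dist_triangle x y z)
      _ ≤ _ := gdef_subadd M hM dist_nonneg dist_nonneg ht hs
  refine max_le ?_ ?_
  · exact le_trans hA (add_le_add (le_max_left _ _) (le_max_left _ _))
  · exact le_trans hg (add_le_add (le_max_right _ _) (le_max_right _ _))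

/-- domination of the fuzzy defect on `Z` -/
lemma GdD_dom (hM : IsFuzzyMetric M luk) (a b : Z) {t : ℝ} (ht : 0 < t) :
    1 - M a b t ≤ GdD M (a : E) (b : E) t :=
  le_trans (gdef_ge M hM ht a b (le_refl _)) (le_max_right _ _)

lemma GdD_dist_lower (x y : E) (t : ℝ) :
    dist x y / (t + dist x y) ≤ GdD M x y t := le_max_left _ _

/-- continuity in the second space variable -/
lemma gdef_contOn_s [CompactSpace Z] (hM : IsFuzzyMetric M luk)
    (hgen : GeneratesTopology M) {t : ℝ} (ht : 0 < t) :
    ContinuousOn (fun s => gdef M s t) (Ici 0) := by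
  intro s hs
  rw [Metric.continuousWithinAt_iff]
  intro ε hε
  obtain ⟨κ, hκ0, hκ⟩ := gdef_small M hM hgen ht (half_pos hε)
  refine ⟨κ, hκ0, fun {s'} hs' hd => ?_⟩
  rw [Real.dist_eq] at hd ⊢
  simp only [Set.mem_Ici] at hs hs'
  have key : ∀ u u' : ℝ, 0 ≤ u → u ≤ u' → u' - u ≤ κ →
      gdef M u' t - gdef M u t ≤ ε/2 ∧ 0 ≤ gdef M u' t - gdef M u t := by
    intro u u' hu huu hk
    constructor
    · have h1 : gdef M u' t ≤ gdef M u t + gdef M (u' - u) t := by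
        have := gdef_subadd_s M hM (s1 := u) (s2 := u' - u) hu (by linarith) ht
        have e : u + (u' - u) = u' := by ring
        rwa [e] at this
      linarith [hκ (u' - u) (by linarith) hk]
    · linarith [gdef_mono_s M hM hu ht huu]
  rcases le_total s s' with h | h
  · have := key s s' hs h (by rw [abs_of_nonneg (by linarith)] at hd; linarith)
    rw [abs_of_nonneg this.2]; linarith [this.1]
  · have := key s' s hs' h (by rw [abs_of_nonpos (by linarith)] at hd; linarith)
    rw [abs_of_nonpos (by linarith [this.2])]; linarith [this.1]

lemma GdD_cont_y [CompactSpace Z] (hM : IsFuzzyMetric M luk)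
    (hgen : GeneratesTopology M) (x : E) {t : ℝ} (ht : 0 < t) :
    Continuous (fun y : E => GdD M x y t) := by
  have h1 : Continuous (fun y : E => dist x y / (t + dist x y)) := by
    refine Continuous.div (continuous_const.dist continuous_id) ?_ ?_
    · exact continuous_const.add (continuous_const.dist continuous_id)
    · intro y
      have : (0:ℝ) ≤ dist x y := dist_nonneg
      positivity
  have h2 : Continuous (fun y : E => gdef M (dist x y) t) :=
    (gdef_contOn_s M hM hgen ht).comp_continuous
      (continuous_const.dist continuous_id) (fun y => dist_nonneg)
  exact h1.max h2

/-- uniform time modulus for `GdD` -/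
lemma GdD_t_mod [CompactSpace Z] (hM : IsFuzzyMetric M luk)
    (hgen : GeneratesTopology M) {c ε : ℝ} (d : ℝ) (hc : 0 < c) (hε : 0 < ε) :
    ∃ η > 0, ∀ (x y : E) (u v : ℝ), c ≤ u → u ≤ v → v ≤ d → v - u ≤ η →
      GdD M x y u ≤ GdD M x y v + ε := by
  obtain ⟨η2, hη20, hη2⟩ := gdef_cont_t M hM hgen (c := c) (d := d) hc hε
  refine ⟨min (ε * c) η2, lt_min (by positivity) hη20, fun x y u v hu huv hv hvu => ?_⟩
  have hA : dist x y / (u + dist x y) ≤ dist x y / (v + dist x y) + ε := by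
    have hd : (0:ℝ) ≤ dist x y := dist_nonneg
    have hu0 : 0 < u := lt_of_lt_of_le hc hu
    have hv0 : 0 < v := lt_of_lt_of_le hu0 huv
    have h1 : dist x y / (u + dist x y) - dist x y / (v + dist x y)
        = dist x y * (v - u) / ((u + dist x y) * (v + dist x y)) := by
      field_simp
      ring
    have h2 : dist x y * (v - u) / ((u + dist x y) * (v + dist x y)) ≤ ε := by
      rw [div_le_iff₀ (by nlinarith : (0:ℝ) < (u + dist x y) * (v + dist x y))]
      have hvu' : v - u ≤ ε * c := le_trans hvu (min_le_left _ _)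
      have b1 : dist x y * (v - u) ≤ dist x y * (ε * c) :=
        mul_le_mul_of_nonneg_left hvu' hd
      have b3 : c * dist x y ≤ u * dist x y := mul_le_mul_of_nonneg_right hu hd
      have b4 : u * dist x y ≤ (u + dist x y) * (v + dist x y) := by nlinarith
      have b5 : ε * (c * dist x y) ≤ ε * ((u + dist x y) * (v + dist x y)) :=
        mul_le_mul_of_nonneg_left (le_trans b3 b4) hε.le
      nlinarith
    linarith
  have hg : gdef M (dist x y) u ≤ gdef M (dist x y) v + ε :=
    hη2 u v (dist x y) hu huv hv (le_trans hvu (min_le_right _ _)) dist_nonneg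
  refine max_le ?_ ?_
  · exact le_trans hA (add_le_add_left (le_max_left _ _) ε)
  · exact le_trans hg (add_le_add_left (le_max_right _ _) ε)

end Aux5
section Aux6

variable {E : Type*} [MetricSpace E] {Z : Set E}

/-- costs of paths through `Z` -/
def pset (M : Z → Z → ℝ → ℝ) (x y : E) (t : ℝ) : Set ℝ :=
  {v | ∃ (a b : Z) (t1 t2 t3 : ℝ), 0 < t1 ∧ 0 < t2 ∧ 0 < t3 ∧ t1 + t2 + t3 = t ∧
    v = GdD M x (a : E) t1 + (1 - M a b t2) + GdD M (b : E) y t3}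

def pcost (M : Z → Z → ℝ → ℝ) (x y : E) (t : ℝ) : ℝ := sInf (pset M x y t)

/-- the extended defect -/
def DD (M : Z → Z → ℝ → ℝ) (x y : E) (t : ℝ) : ℝ :=
  min (GdD M x y t) (pcost M x y t)

variable (M : Z → Z → ℝ → ℝ)

lemma pset_nonempty [Nonempty Z] (x y : E) {t : ℝ} (ht : 0 < t) :
    (pset M x y t).Nonempty := by
  obtain z0 : Z := Classical.arbitrary Z
  exact ⟨_, z0, z0, t/3, t/3, t/3, by linarith, by linarith, by linarith, by ring, rfl⟩

lemma pset_mem_nonneg (hM : IsFuzzyMetric M luk) {x y : E} {t : ℝ} {v : ℝ}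
    (hv : v ∈ pset M x y t) : 0 ≤ v := by
  obtain ⟨a, b, t1, t2, t3, h1, h2, h3, -, rfl⟩ := hv
  have g1 := GdD_nonneg M hM x (a : E) h1
  have g2 := GdD_nonneg M hM (b : E) y h3
  have g3 := hM.le_one a b t2 h2
  linarith

lemma pset_bddBelow (hM : IsFuzzyMetric M luk) (x y : E) (t : ℝ) :
    BddBelow (pset M x y t) :=
  ⟨0, fun v hv => pset_mem_nonneg M hM hv⟩

lemma pcost_nonneg [Nonempty Z] (hM : IsFuzzyMetric M luk) (x y : E) {t : ℝ} (ht : 0 < t) :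
    0 ≤ pcost M x y t :=
  le_csInf (pset_nonempty M x y ht) (fun v hv => pset_mem_nonneg M hM hv)

lemma DD_nonneg [Nonempty Z] (hM : IsFuzzyMetric M luk) (x y : E) {t : ℝ} (ht : 0 < t) :
    0 ≤ DD M x y t :=
  le_min (GdD_nonneg M hM x y ht) (pcost_nonneg M hM x y ht)

lemma DD_lt_one [Nonempty Z] [CompactSpace Z] (hM : IsFuzzyMetric M luk)
    (hgen : GeneratesTopology M) (x y : E) {t : ℝ} (ht : 0 < t) :
    DD M x y t < 1 :=
  lt_of_le_of_lt (min_le_left _ _) (GdD_lt_one M hM hgen x y ht)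

lemma pset_symm (hM : IsFuzzyMetric M luk) (x y : E) (t : ℝ) :
    pset M x y t = pset M y x t := by
  have key : ∀ u v : E, pset M u v t ⊆ pset M v u t := by
    rintro u v w ⟨a, b, t1, t2, t3, h1, h2, h3, hsum, rfl⟩
    refine ⟨b, a, t3, t2, t1, h3, h2, h1, by linarith, ?_⟩
    rw [GdD_symm M v (b : E), GdD_symm M (a : E) u, hM.symm a b t2 h2]
    ring
  exact le_antisymm (key x y) (key y x)

lemma DD_symm (hM : IsFuzzyMetric M luk) (x y : E) (t : ℝ) :
    DD M x y t = DD M y x t := by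
  unfold DD pcost
  rw [GdD_symm, pset_symm M hM]

lemma DD_self [CompactSpace Z] [Nonempty Z] (hM : IsFuzzyMetric M luk)
    (hgen : GeneratesTopology M) (x : E) {t : ℝ} (ht : 0 < t) :
    DD M x x t = 0 := by
  have h1 := GdD_self M hM hgen x ht
  have h2 := pcost_nonneg M hM x x ht
  simp only [DD, h1]
  exact min_eq_left h2

/-- the extension property: `DD` restricted to `Z` is the defect of `M` -/
lemma DD_restrict [CompactSpace Z] [Nonempty Z] (hM : IsFuzzyMetric M luk)
    (hgen : GeneratesTopology M) (a b : Z) {t : ℝ} (ht : 0 < t) :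
    DD M (a : E) (b : E) t = 1 - M a b t := by
  refine le_antisymm ?_ ?_
  · -- DD ≤ 1 - M a b t, via paths with middle time close to t
    refine le_of_forall_pos_le_add (fun ε hε => ?_)
    have hcont := hM.continuousOn a b t ht
    rw [Metric.continuousWithinAt_iff] at hcont
    obtain ⟨δ, hδ0, hδ⟩ := hcont ε hε
    set t2 : ℝ := t - min (δ/2) (t/2) with ht2_def
    have hmin : 0 < min (δ/2) (t/2) := lt_min (by linarith) (by linarith)
    have ht2a : 0 < t2 := by
      have := min_le_right (δ/2) (t/2); simp only [ht2_def]; linarith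
    have ht2b : t2 < t := by simp only [ht2_def]; linarith
    have hclose : |M a b t2 - M a b t| < ε := by
      have := hδ (Set.mem_Ioi.2 ht2a) (by
        rw [Real.dist_eq, abs_of_nonpos (by linarith)]
        simp only [ht2_def]
        have := min_le_left (δ/2) (t/2); linarith)
      rwa [Real.dist_eq] at this
    have helt : GdD M (a : E) (a : E) ((t - t2)/2) + (1 - M a b t2) +
        GdD M (b : E) (b : E) ((t - t2)/2) ∈ pset M (a : E) (b : E) t :=
      ⟨a, b, (t - t2)/2, t2, (t - t2)/2, by linarith, ht2a, by linarith, by ring, rfl⟩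
    have hle : pcost M (a : E) (b : E) t ≤ 1 - M a b t2 := by
      have h0 : (0:ℝ) < (t - t2)/2 := by linarith
      have : pcost M (a : E) (b : E) t ≤ _ := csInf_le (pset_bddBelow M hM _ _ _) helt
      rwa [GdD_self M hM hgen (a : E) h0, GdD_self M hM hgen (b : E) h0, zero_add,
        add_zero] at this
    have := abs_lt.1 hclose
    calc DD M (a : E) (b : E) t ≤ pcost M (a : E) (b : E) t := min_le_right _ _
      _ ≤ 1 - M a b t2 := hle
      _ ≤ 1 - M a b t + ε := by linarith [this.1]
  · -- 1 - M a b t ≤ DD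
    refine le_min (GdD_dom M hM a b ht) ?_
    refine le_csInf (pset_nonempty M _ _ ht) ?_
    rintro v ⟨a', b', t1, t2, t3, h1, h2, h3, hsum, rfl⟩
    have g1 : 1 - M a a' t1 ≤ GdD M (a : E) (a' : E) t1 := GdD_dom M hM a a' h1
    have g3 : 1 - M b' b t3 ≤ GdD M (b' : E) (b : E) t3 := GdD_dom M hM b' b h3
    have tri := fm_tri3 M hM a a' b' b h1 h2 h3
    rw [hsum] at tri
    linarith

/-- monotonicity of pcost in t -/
lemma pcost_anti_t [Nonempty Z] (hM : IsFuzzyMetric M luk) (x y : E) {t t' : ℝ}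
    (ht : 0 < t) (h : t ≤ t') : pcost M x y t' ≤ pcost M x y t := by
  refine le_csInf (pset_nonempty M x y ht) ?_
  rintro v ⟨a, b, t1, t2, t3, h1, h2, h3, hsum, rfl⟩
  have helt : GdD M x (a : E) t1 + (1 - M a b t2) + GdD M (b : E) y (t3 + (t' - t)) ∈
      pset M x y t' :=
    ⟨a, b, t1, t2, t3 + (t' - t), h1, h2, by linarith, by linarith, rfl⟩
  have : pcost M x y t' ≤ _ := csInf_le (pset_bddBelow M hM x y t') helt
  have hanti : GdD M (b : E) y (t3 + (t' - t)) ≤ GdD M (b : E) y t3 :=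
    GdD_anti_t M hM _ _ h3 (by linarith)
  linarith

lemma DD_anti_t [Nonempty Z] (hM : IsFuzzyMetric M luk) (x y : E) {t t' : ℝ}
    (ht : 0 < t) (h : t ≤ t') : DD M x y t' ≤ DD M x y t :=
  min_le_min (GdD_anti_t M hM x y ht h) (pcost_anti_t M hM x y ht h)

/-- the triangle inequality for the extended defect -/
lemma DD_triangle [Nonempty Z] [CompactSpace Z] (hM : IsFuzzyMetric M luk)
    (x y z : E) {t s : ℝ} (ht : 0 < t) (hs : 0 < s) :
    DD M x z (t + s) ≤ DD M x y t + DD M y z s := by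
  have hgg : DD M x z (t + s) ≤ GdD M x y t + GdD M y z s :=
    le_trans (min_le_left _ _) (GdD_subadd M hM x y z ht hs)
  have hgp : DD M x z (t + s) ≤ GdD M x y t + pcost M y z s := by
    have key : ∀ v ∈ pset M y z s, DD M x z (t + s) ≤ GdD M x y t + v := by
      rintro v ⟨a, b, s1, s2, s3, h1, h2, h3, hsum, rfl⟩
      have hsub : GdD M x (a : E) (t + s1) ≤ GdD M x y t + GdD M y (a : E) s1 :=
        GdD_subadd M hM x y (a : E) ht h1
      have helt : GdD M x (a : E) (t + s1) + (1 - M a b s2) + GdD M (b : E) z s3 ∈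
          pset M x z (t + s) :=
        ⟨a, b, t + s1, s2, s3, by linarith, h2, h3, by linarith, rfl⟩
      have : pcost M x z (t + s) ≤ _ := csInf_le (pset_bddBelow M hM x z (t+s)) helt
      have hDD : DD M x z (t + s) ≤ pcost M x z (t + s) := min_le_right _ _
      linarith
    have : DD M x z (t + s) - GdD M x y t ≤ pcost M y z s :=
      le_csInf (pset_nonempty M y z hs) (fun v hv => by linarith [key v hv])
    linarith
  have hpg : DD M x z (t + s) ≤ pcost M x y t + GdD M y z s := by
    have key : ∀ v ∈ pset M x y t, DD M x z (t + s) ≤ v + GdD M y z s := by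
      rintro v ⟨a, b, t1, t2, t3, h1, h2, h3, hsum, rfl⟩
      have hsub : GdD M (b : E) z (t3 + s) ≤ GdD M (b : E) y t3 + GdD M y z s :=
        GdD_subadd M hM (b : E) y z h3 hs
      have helt : GdD M x (a : E) t1 + (1 - M a b t2) + GdD M (b : E) z (t3 + s) ∈
          pset M x z (t + s) :=
        ⟨a, b, t1, t2, t3 + s, h1, h2, by linarith, by linarith, rfl⟩
      have : pcost M x z (t + s) ≤ _ := csInf_le (pset_bddBelow M hM x z (t+s)) helt
      have hDD : DD M x z (t + s) ≤ pcost M x z (t + s) := min_le_right _ _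
      linarith
    have : DD M x z (t + s) - GdD M y z s ≤ pcost M x y t :=
      le_csInf (pset_nonempty M x y ht) (fun v hv => by linarith [key v hv])
    linarith
  have hpp : DD M x z (t + s) ≤ pcost M x y t + pcost M y z s := by
    have key : ∀ v1 ∈ pset M x y t, ∀ v2 ∈ pset M y z s,
        DD M x z (t + s) ≤ v1 + v2 := by
      rintro v1 ⟨a, b, t1, t2, t3, h1, h2, h3, hsum1, rfl⟩
        v2 ⟨c, e, s1, s2, s3, k1, k2, k3, hsum2, rfl⟩
      have hmid : GdD M (b : E) y t3 + GdD M y (c : E) s1 ≥ 1 - M b c (t3 + s1) := by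
        have h5 : GdD M (b : E) (c : E) (t3 + s1) ≤
            GdD M (b : E) y t3 + GdD M y (c : E) s1 :=
          GdD_subadd M hM (b : E) y (c : E) h3 k1
        linarith [GdD_dom M hM b c (by linarith : (0:ℝ) < t3 + s1)]
      have hchain := fm_tri3 M hM a b c e (t1 := t2) (t2 := t3 + s1) (t3 := s2)
        h2 (by linarith) k2
      have helt : GdD M x (a : E) t1 + (1 - M a e (t2 + (t3 + s1) + s2)) +
          GdD M (e : E) z s3 ∈ pset M x z (t + s) :=
        ⟨a, e, t1, t2 + (t3 + s1) + s2, s3, h1, by linarith, k3, by linarith, rfl⟩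
      have : pcost M x z (t + s) ≤ _ := csInf_le (pset_bddBelow M hM x z (t+s)) helt
      have hDD : DD M x z (t + s) ≤ pcost M x z (t + s) := min_le_right _ _
      linarith
    have h2 : ∀ v1 ∈ pset M x y t, DD M x z (t + s) - v1 ≤ pcost M y z s :=
      fun v1 hv1 => le_csInf (pset_nonempty M y z hs)
        (fun v2 hv2 => by linarith [key v1 hv1 v2 hv2])
    have h3 : DD M x z (t + s) - pcost M y z s ≤ pcost M x y t :=
      le_csInf (pset_nonempty M x y ht) (fun v1 hv1 => by linarith [h2 v1 hv1])
    linarith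
  rcases min_cases (GdD M x y t) (pcost M x y t) with ⟨e1, -⟩ | ⟨e1, -⟩ <;>
    rcases min_cases (GdD M y z s) (pcost M y z s) with ⟨e2, -⟩ | ⟨e2, -⟩ <;>
      simp only [DD, e1, e2] <;> assumption

end Aux6
section Aux7

variable {E : Type*} [MetricSpace E] {Z : Set E} (M : Z → Z → ℝ → ℝ)

lemma frac_lower {ε d u t : ℝ} (hε : 0 < ε) (hεd : ε ≤ d) (hu : 0 < u) (hut : u ≤ t) :
    ε / (t + ε) ≤ d / (u + d) := by
  rw [div_le_div_iff₀ (by linarith) (by linarith)]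
  nlinarith

/-- positivity of the extended defect at distinct points -/
lemma DD_pos [CompactSpace Z] [Nonempty Z] (hM : IsFuzzyMetric M luk)
    (hgen : GeneratesTopology M) (hZc : IsClosed Z) {x y : E} (hxy : x ≠ y)
    {t : ℝ} (ht : 0 < t) : 0 < DD M x y t := by
  have hD : 0 < dist x y := dist_pos.2 hxy
  set ε : ℝ := dist x y / 4 with hε_def
  have hε : 0 < ε := by positivity
  -- lower bound on Gd-type terms with a far endpoint
  have hfar : ∀ (u w : E) (t1 : ℝ), 0 < t1 → t1 ≤ t → ε ≤ dist u w →
      ε / (t + ε) ≤ GdD M u w t1 := fun u w t1 h1 h1t hd =>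
    le_trans (frac_lower hε hd h1 h1t) (GdD_dist_lower M u w t1)
  -- the compact set of pairs near (x, y)
  set S : Set (Z × Z) := {p | dist (p.1 : E) x ≤ ε ∧ dist (p.2 : E) y ≤ ε} with hS_def
  have hSclosed : IsClosed S := by
    refine IsClosed.inter ?_ ?_
    · exact isClosed_le ((continuous_subtype_val.comp continuous_fst).dist continuous_const)
        continuous_const
    · exact isClosed_le ((continuous_subtype_val.comp continuous_snd).dist continuous_const)
        continuous_const
  -- a positive lower bound c for the middle term over S (when S is nonempty)
  obtain ⟨c, hc, hcS⟩ : ∃ c, 0 < c ∧ ∀ p ∈ S, c ≤ 1 - M p.1 p.2 t := by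
    rcases Set.eq_empty_or_nonempty S with hS | hS
    · exact ⟨1, one_pos, fun p hp => by rw [hS] at hp; exact absurd hp (Set.notMem_empty p)⟩
    · have hScomp : IsCompact S := hSclosed.isCompact
      have hcont : ContinuousOn (fun p : Z × Z => M p.1 p.2 t) S := by
        have h1 : ContinuousOn (fun p : Z × Z => ((p, t) : (Z × Z) × ℝ)) S :=
          (continuous_id.prodMk continuous_const).continuousOn
        exact (fm_jointCont M hM hgen).comp h1 (fun p _ => ⟨trivial, ht⟩)
      obtain ⟨p0, hp0S, hp0⟩ := hScomp.exists_isMaxOn hS hcont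
      refine ⟨1 - M p0.1 p0.2 t, ?_, fun p hp => by
        have h6 : M p.1 p.2 t ≤ M p0.1 p0.2 t := hp0 hp
        linarith⟩
      have hne : p0.1 ≠ p0.2 := by
        intro h
        have h1 : dist ((p0.1 : E)) ((p0.2 : E)) ≥ dist x y - ε - ε := by
          have d1 := hp0S.1
          have d2 := hp0S.2
          have := dist_triangle x (p0.1 : E) (p0.2 : E)
          have := dist_triangle (p0.1 : E) (p0.2 : E) y
          have := dist_triangle x (p0.2 : E) y
          have hd2 : dist x (p0.1 : E) ≤ ε := by rwa [dist_comm] at d1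
          have := dist_triangle x (p0.1 : E) (p0.2 : E)
          have h5 : dist x y ≤ dist x (p0.1 : E) + dist (p0.1 : E) (p0.2 : E) +
              dist ((p0.2 : E)) y := by
            calc dist x y ≤ dist x (p0.2 : E) + dist ((p0.2 : E)) y := dist_triangle _ _ _
              _ ≤ (dist x (p0.1 : E) + dist (p0.1 : E) (p0.2 : E)) + dist ((p0.2 : E)) y := by
                  linarith [dist_triangle x (p0.1 : E) (p0.2 : E)]
          have hd3 : dist ((p0.2 : E)) y ≤ ε := d2
          linarith
        rw [h] at h1
        simp only [dist_self] at h1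
        simp only [hε_def] at h1
        linarith
      have := (hM.eq_one_iff p0.1 p0.2 t ht)
      have hlt : M p0.1 p0.2 t < 1 :=
        lt_of_le_of_ne (hM.le_one p0.1 p0.2 t ht) (fun h => hne (this.1 h))
      linarith
  set r0 : ℝ := min (ε / (t + ε)) c with hr0_def
  have hr0 : 0 < r0 := lt_min (by positivity) hc
  refine lt_min ?_ ?_
  · calc (0:ℝ) < dist x y / (t + dist x y) := by positivity
      _ ≤ GdD M x y t := GdD_dist_lower M x y t
  · refine lt_of_lt_of_le hr0 (le_csInf (pset_nonempty M x y ht) ?_)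
    rintro v ⟨a, b, t1, t2, t3, h1, h2, h3, hsum, rfl⟩
    have hg1 : 0 ≤ GdD M x (a : E) t1 := GdD_nonneg M hM _ _ h1
    have hg3 : 0 ≤ GdD M (b : E) y t3 := GdD_nonneg M hM _ _ h3
    have hmid0 : 0 ≤ 1 - M a b t2 := by linarith [hM.le_one a b t2 h2]
    rcases le_or_gt ε (dist x (a : E)) with hfar1 | hnear1
    · have := hfar x (a : E) t1 h1 (by linarith) hfar1
      calc r0 ≤ ε / (t + ε) := min_le_left _ _
        _ ≤ GdD M x (a : E) t1 := this
        _ ≤ _ := by linarith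
    rcases le_or_gt ε (dist (b : E) y) with hfar3 | hnear3
    · have := hfar (b : E) y t3 h3 (by linarith) hfar3
      calc r0 ≤ ε / (t + ε) := min_le_left _ _
        _ ≤ GdD M (b : E) y t3 := this
        _ ≤ _ := by linarith
    · have hmem : (a, b) ∈ S := by
        constructor
        · simp only [hS_def]; rw [dist_comm]; exact hnear1.le
        · exact hnear3.le
      have hmono : M a b t2 ≤ M a b t := fm_mono M hM a b h2 (by linarith)
      have := hcS (a, b) hmem
      calc r0 ≤ c := min_le_right _ _
        _ ≤ 1 - M a b t := this
        _ ≤ 1 - M a b t2 := by linarith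
        _ ≤ _ := by linarith

end Aux7
section Aux8

variable {E : Type*} [MetricSpace E] {Z : Set E} (M : Z → Z → ℝ → ℝ)

lemma gdef_contOn_t [CompactSpace Z] (hM : IsFuzzyMetric M luk)
    (hgen : GeneratesTopology M) {s : ℝ} (hs : 0 ≤ s) :
    ContinuousOn (fun u => gdef M s u) (Ioi 0) := by
  intro t0 ht0
  simp only [Set.mem_Ioi] at ht0
  rw [Metric.continuousWithinAt_iff]
  intro ε hε
  obtain ⟨η, hη0, hη⟩ := gdef_cont_t M hM hgen (c := t0/2) (d := 2*t0) (by linarith)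
    (half_pos hε)
  refine ⟨min η (t0/2), lt_min hη0 (by linarith), fun {u} hu hdist => ?_⟩
  simp only [Set.mem_Ioi] at hu
  rw [Real.dist_eq] at hdist ⊢
  have h1 := abs_lt.1 hdist
  have hul : t0/2 < u := by
    have := min_le_right η (t0/2); linarith [h1.1]
  have huu : u < 3*t0/2 := by
    have := min_le_right η (t0/2); linarith [h1.2]
  have hmin : min η (t0/2) ≤ η := min_le_left _ _
  rcases le_total u t0 with h | h
  · have ha := hη u t0 s hul.le h (by linarith) (by linarith [h1.1]) hs
    have hb := gdef_anti_t M hM hs (by linarith : (0:ℝ) < u) h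
    rw [abs_lt]; constructor <;> linarith
  · have ha := hη t0 u s (by linarith) h (by linarith) (by linarith [h1.2]) hs
    have hb := gdef_anti_t M hM hs ht0 h
    rw [abs_lt]; constructor <;> linarith

lemma pcost_shrink [CompactSpace Z] [Nonempty Z] (hM : IsFuzzyMetric M luk)
    (hgen : GeneratesTopology M) (x y : E) {t0 ε : ℝ} (ht0 : 0 < t0) (hε : 0 < ε) :
    ∃ η > 0, ∀ u v, t0/2 ≤ u → u ≤ v → v ≤ 2*t0 → v - u ≤ η →
      pcost M x y u ≤ pcost M x y v + ε := by
  obtain ⟨ηG, hηG0, hηG⟩ := GdD_t_mod M hM hgen (c := t0/12) (2*t0) (by linarith)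
    (half_pos hε)
  obtain ⟨ηM, hηM0, hηM⟩ := fm_ucont M hM hgen (c := t0/12) (d := 2*t0) (by linarith)
    (half_pos hε)
  refine ⟨min (min ηG ηM) (t0/24), lt_min (lt_min hηG0 hηM0) (by linarith),
    fun u v hu huv hv hd => ?_⟩
  have hu0 : 0 < u := by linarith
  have hv0 : 0 < v := by linarith
  rcases eq_or_lt_of_le huv with rfl | hlt
  · linarith [le_refl (pcost M x y u)]
  have hd0 : 0 < v - u := by linarith
  have hdG : v - u ≤ ηG := le_trans hd (le_trans (min_le_left _ _) (min_le_left _ _))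
  have hdM : v - u ≤ ηM := le_trans hd (le_trans (min_le_left _ _) (min_le_right _ _))
  have hd24 : v - u ≤ t0/24 := le_trans hd (min_le_right _ _)
  obtain ⟨w, hw, hwlt⟩ := exists_lt_of_csInf_lt (pset_nonempty M x y hv0)
    (lt_add_of_pos_right (sInf (pset M x y v)) (half_pos hε))
  obtain ⟨a, b, t1, t2, t3, h1, h2, h3, hsum, rfl⟩ := hw
  have hbig : v/3 ≤ t1 ∨ v/3 ≤ t2 ∨ v/3 ≤ t3 := by
    by_contra hcon
    push_neg at hcon
    obtain ⟨c1, c2, c3⟩ := hcon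
    linarith
  have hv3 : t0/6 ≤ v/3 := by linarith
  rcases hbig with hbig | hbig | hbig
  · -- shrink t1
    have hnew : GdD M x (a : E) (t1 - (v - u)) + (1 - M a b t2) + GdD M (b : E) y t3 ∈
        pset M x y u :=
      ⟨a, b, t1 - (v - u), t2, t3, by linarith, h2, h3, by linarith, rfl⟩
    have hmod : GdD M x (a : E) (t1 - (v - u)) ≤ GdD M x (a : E) t1 + ε/2 :=
      hηG x (a : E) (t1 - (v - u)) t1 (by linarith) (by linarith) (by linarith) (by linarith)
    have hle : pcost M x y u ≤ _ := csInf_le (pset_bddBelow M hM x y u) hnew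
    have : pcost M x y v = sInf (pset M x y v) := rfl
    linarith
  · -- shrink t2
    have hnew : GdD M x (a : E) t1 + (1 - M a b (t2 - (v - u))) + GdD M (b : E) y t3 ∈
        pset M x y u :=
      ⟨a, b, t1, t2 - (v - u), t3, h1, by linarith, h3, by linarith, rfl⟩
    have hmod0 := hηM a b a b (t2 - (v - u)) t2
      ⟨by linarith, by linarith⟩ ⟨by linarith, by linarith⟩
      (by simpa using hηM0.le) (by simpa using hηM0.le)
      (by rw [abs_of_nonpos (by linarith)]; linarith)
    have hmod : 1 - M a b (t2 - (v - u)) ≤ 1 - M a b t2 + ε/2 := by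
      have := abs_le.1 hmod0; linarith [this.1]
    have hle : pcost M x y u ≤ _ := csInf_le (pset_bddBelow M hM x y u) hnew
    have : pcost M x y v = sInf (pset M x y v) := rfl
    linarith
  · -- shrink t3
    have hnew : GdD M x (a : E) t1 + (1 - M a b t2) + GdD M (b : E) y (t3 - (v - u)) ∈
        pset M x y u :=
      ⟨a, b, t1, t2, t3 - (v - u), h1, h2, by linarith, by linarith, rfl⟩
    have hmod : GdD M (b : E) y (t3 - (v - u)) ≤ GdD M (b : E) y t3 + ε/2 :=
      hηG (b : E) y (t3 - (v - u)) t3 (by linarith) (by linarith) (by linarith) (by linarith)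
    have hle : pcost M x y u ≤ _ := csInf_le (pset_bddBelow M hM x y u) hnew
    have : pcost M x y v = sInf (pset M x y v) := rfl
    linarith

lemma pcost_contOn_t [CompactSpace Z] [Nonempty Z] (hM : IsFuzzyMetric M luk)
    (hgen : GeneratesTopology M) (x y : E) :
    ContinuousOn (fun t => pcost M x y t) (Ioi 0) := by
  intro t0 ht0
  simp only [Set.mem_Ioi] at ht0
  rw [Metric.continuousWithinAt_iff]
  intro ε hε
  obtain ⟨η, hη0, hη⟩ := pcost_shrink M hM hgen x y ht0 (half_pos hε)
  refine ⟨min η (t0/2), lt_min hη0 (by linarith), fun {u} hu hdist => ?_⟩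
  simp only [Set.mem_Ioi] at hu
  rw [Real.dist_eq] at hdist ⊢
  have h1 := abs_lt.1 hdist
  have hm1 : min η (t0/2) ≤ η := min_le_left _ _
  have hm2 : min η (t0/2) ≤ t0/2 := min_le_right _ _
  rcases le_total u t0 with h | h
  · have ha := hη u t0 (by linarith [h1.1]) h (by linarith) (by linarith [h1.1])
    have hb := pcost_anti_t M hM x y (by linarith [h1.1] : (0:ℝ) < u) h
    rw [abs_lt]; constructor <;> linarith
  · have ha := hη t0 u (by linarith) h (by linarith [h1.2]) (by linarith [h1.2])
    have hb := pcost_anti_t M hM x y ht0 h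
    rw [abs_lt]; constructor <;> linarith

lemma DD_contOn_t [CompactSpace Z] [Nonempty Z] (hM : IsFuzzyMetric M luk)
    (hgen : GeneratesTopology M) (x y : E) :
    ContinuousOn (fun t => DD M x y t) (Ioi 0) := by
  have hA : ContinuousOn (fun t : ℝ => dist x y / (t + dist x y)) (Ioi 0) := by
    refine ContinuousOn.div continuousOn_const
      (continuousOn_id.add continuousOn_const) ?_
    intro t ht
    simp only [Set.mem_Ioi] at ht
    have : (0:ℝ) ≤ dist x y := dist_nonneg
    positivity
  have hB := gdef_contOn_t M hM hgen (s := dist x y) dist_nonneg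
  have hP := pcost_contOn_t M hM hgen x y
  intro t ht
  exact ((hA t ht).max (hB t ht)).min (hP t ht)

end Aux8
section Aux9

variable {E : Type*} [MetricSpace E] {Z : Set E} (M : Z → Z → ℝ → ℝ)

/-- re-centering fuzzy balls -/
lemma fm_recenter (hM : IsFuzzyMetric M luk) (hgen : GeneratesTopology M)
    (x' : Z) (V : Set Z) (hV : IsOpen V) (hx : x' ∈ V) :
    ∃ r0 t0 : ℝ, 0 < r0 ∧ r0 < 1 ∧ 0 < t0 ∧ fmBall M x' r0 t0 ⊆ V := by
  obtain ⟨B, hBmem, hxB, hBV⟩ := hgen.exists_subset_of_mem_open hx hV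
  obtain ⟨w, r, τ, hr0, hr1, hτ, rfl⟩ := hBmem
  simp only [fmBall, Set.mem_setOf_eq] at hxB
  set γ : ℝ := M w x' τ - (1 - r) with hγ_def
  have hγ : 0 < γ := by simp only [hγ_def]; linarith
  have hcont := hM.continuousOn w x' τ hτ
  rw [Metric.continuousWithinAt_iff] at hcont
  obtain ⟨δ, hδ0, hδ⟩ := hcont (γ/2) (by linarith)
  set τ' : ℝ := min (δ/2) (τ/2) with hτ'_def
  have hτ'0 : 0 < τ' := lt_min (by linarith) (by linarith)
  have hτ'δ : τ' ≤ δ/2 := min_le_left _ _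
  have hτ'τ : τ' ≤ τ/2 := min_le_right _ _
  have hkey : 1 - r + γ/2 < M w x' (τ - τ') := by
    have := hδ (x := τ - τ') (Set.mem_Ioi.2 (by linarith))
      (by rw [Real.dist_eq, abs_of_nonpos (by linarith)]; linarith)
    rw [Real.dist_eq] at this
    have := abs_lt.1 this
    simp only [hγ_def]
    linarith [this.1]
  refine ⟨min (γ/2) (1/2), τ', lt_min (by linarith) (by norm_num),
    lt_of_le_of_lt (min_le_right _ _) (by norm_num), hτ'0, ?_⟩
  intro y hy
  simp only [fmBall, Set.mem_setOf_eq] at hy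
  have hy2 : 1 - γ/2 < M x' y τ' := by
    have := min_le_left (γ/2) (1/2); linarith
  refine hBV ?_
  simp only [fmBall, Set.mem_setOf_eq]
  have htri := fm_tri M hM w x' y (t := τ - τ') (s := τ') (by linarith) hτ'0
  have hsum : τ - τ' + τ' = τ := by ring
  rw [hsum] at htri
  linarith

/-- openness of the extended fuzzy balls -/
lemma DD_sub_open [CompactSpace Z] [Nonempty Z] (hM : IsFuzzyMetric M luk)
    (hgen : GeneratesTopology M) (x : E) {t : ℝ} (ht : 0 < t) (r : ℝ) :
    IsOpen {y : E | DD M x y t < r} := by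
  have hsplit : {y : E | DD M x y t < r} =
      {y : E | GdD M x y t < r} ∪ {y : E | pcost M x y t < r} := by
    ext y; simp only [DD, Set.mem_setOf_eq, Set.mem_union, min_lt_iff]
  rw [hsplit]
  refine IsOpen.union ?_ ?_
  · exact (isOpen_Iio (a := r)).preimage (GdD_cont_y M hM hgen x ht)
  · rw [isOpen_iff_mem_nhds]
    intro y0 hy0
    simp only [Set.mem_setOf_eq] at hy0
    obtain ⟨w, hw, hwlt⟩ := exists_lt_of_csInf_lt
      (pset_nonempty M x y0 ht) (show sInf (pset M x y0 t) < r from hy0)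
    obtain ⟨a, b, t1, t2, t3, h1, h2, h3, hsum, rfl⟩ := hw
    set c3 : ℝ := r - GdD M x (a : E) t1 - (1 - M a b t2) with hc3_def
    have hy0c3 : GdD M (b : E) y0 t3 < c3 := by simp only [hc3_def]; linarith
    have hUopen : IsOpen {y : E | GdD M (b : E) y t3 < c3} :=
      (isOpen_Iio (a := c3)).preimage (GdD_cont_y M hM hgen (b : E) h3)
    refine Filter.mem_of_superset (hUopen.mem_nhds hy0c3) ?_
    intro y hy
    simp only [Set.mem_setOf_eq] at hy ⊢
    have helt : GdD M x (a : E) t1 + (1 - M a b t2) + GdD M (b : E) y t3 ∈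
        pset M x y t := ⟨a, b, t1, t2, t3, h1, h2, h3, hsum, rfl⟩
    have : pcost M x y t ≤ _ := csInf_le (pset_bddBelow M hM x y t) helt
    simp only [hc3_def] at hy
    linarith

/-- small extended balls shrink in the metric -/
lemma small_ball_aux {β t r d u : ℝ} (hβ : 0 < β) (ht : 0 < t) (hu : 0 < u) (hut : u ≤ t)
    (hd : 0 ≤ d) (hr0 : 0 < r) (hr1 : r < 1) (hrβ : r * (t + β) ≤ β)
    (h : d / (u + d) < r) : d < β := by
  have h2 : d < r * (u + d) := by
    rw [div_lt_iff₀ (by linarith)] at h; linarith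
  nlinarith

/-- the extended fuzzy metric generates the topology -/
lemma Mext_generates [CompactSpace Z] [Nonempty Z] (hM : IsFuzzyMetric M luk)
    (hgen : GeneratesTopology M) (hZc : IsClosed Z) (hZne : Z.Nonempty) :
    GeneratesTopology (fun (x y : E) t => 1 - DD M x y t) := by
  have hball_eq : ∀ (x : E) (r t : ℝ),
      fmBall (fun (x y : E) t => 1 - DD M x y t) x r t = {y : E | DD M x y t < r} := by
    intro x r t; ext y
    simp only [fmBall, Set.mem_setOf_eq]
    constructor <;> intro h <;> linarith
  refine TopologicalSpace.isTopologicalBasis_of_isOpen_of_nhds ?_ ?_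
  · rintro u ⟨x, r, t, hr0, hr1, ht, rfl⟩
    rw [hball_eq]
    exact DD_sub_open M hM hgen x ht r
  · intro x u hxu hu
    rw [Metric.isOpen_iff] at hu
    obtain ⟨η3, hη30, hball⟩ := hu x hxu
    set η : ℝ := η3 / 3 with hη_def
    have hη : 0 < η := by simp only [hη_def]; linarith
    by_cases hx : x ∈ Z
    · -- the case of a point of Z
      set x' : Z := ⟨x, hx⟩ with hx'_def
      set V : Set Z := {z : Z | (z : E) ∈ Metric.ball x η} with hV_def
      have hVopen : IsOpen V := Metric.isOpen_ball.preimage continuous_subtype_val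
      have hx'V : x' ∈ V := by
        simp only [hV_def, Set.mem_setOf_eq, Metric.mem_ball, hx'_def, dist_self]
        exact hη
      obtain ⟨r0, t0, hr00, hr01, ht0, hBV⟩ := fm_recenter M hM hgen x' V hVopen hx'V
      have hB2open : IsOpen (fmBall M x' (r0/2) (t0/2)) :=
        ball_isOpen M hgen (by linarith) (by linarith) (by linarith)
      have hx'B2 : x' ∈ fmBall M x' (r0/2) (t0/2) :=
        mem_ball_self M hM (by linarith) (by linarith)
      rw [Metric.isOpen_iff] at hB2open
      obtain ⟨ε', hε'0, hε'⟩ := hB2open x' hx'B2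
      set β : ℝ := min η ε' with hβ_def
      have hβ : 0 < β := lt_min hη hε'0
      set t : ℝ := t0/2 with ht_def
      have ht : 0 < t := by simp only [ht_def]; linarith
      set r : ℝ := min (r0/2) (β/(t+β)) with hr_def
      have hr0' : 0 < r := lt_min (by linarith) (by positivity)
      have hr1' : r < 1 := lt_of_le_of_lt (min_le_left _ _) (by linarith)
      have hrβ : r * (t + β) ≤ β := by
        have h1 : r ≤ β/(t+β) := min_le_right _ _
        rw [← le_div_iff₀ (by positivity)]
        exact h1
      refine ⟨fmBall (fun (x y : E) t => 1 - DD M x y t) x r t,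
        ⟨x, r, t, hr0', hr1', ht, rfl⟩, ?_, ?_⟩
      · rw [hball_eq]
        simp only [Set.mem_setOf_eq, DD_self M hM hgen x ht]
        exact hr0'
      · rw [hball_eq]
        intro y hy
        simp only [Set.mem_setOf_eq] at hy
        rcases min_lt_iff.1 hy with hG | hP
        · -- direct branch
          have hd := lt_of_le_of_lt (GdD_dist_lower M x y t) hG
          have : dist x y < β :=
            small_ball_aux hβ ht ht (le_refl t) dist_nonneg hr0' hr1' hrβ hd
          refine hball ?_
          rw [Metric.mem_ball, dist_comm]
          have : β ≤ η := min_le_left _ _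
          simp only [hη_def] at this ⊢
          linarith [min_le_left η ε', this]
        · -- path branch
          obtain ⟨w, hw, hwlt⟩ := exists_lt_of_csInf_lt
            (pset_nonempty M x y ht) (show sInf (pset M x y t) < r from hP)
          obtain ⟨a, b, t1, t2, t3, h1, h2, h3, hsum, rfl⟩ := hw
          have hg1 : 0 ≤ GdD M x (a : E) t1 := GdD_nonneg M hM _ _ h1
          have hg3 : 0 ≤ GdD M (b : E) y t3 := GdD_nonneg M hM _ _ h3
          have hmid0 : 0 ≤ 1 - M a b t2 := by linarith [hM.le_one a b t2 h2]
          have hw1 : GdD M x (a : E) t1 < r := by linarith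
          have hw2 : 1 - M a b t2 < r := by linarith
          have hw3 : GdD M (b : E) y t3 < r := by linarith
          -- a is β-close to x
          have hda : dist x (a : E) < β :=
            small_ball_aux hβ ht h1 (by linarith) dist_nonneg hr0' hr1' hrβ
              (lt_of_le_of_lt (GdD_dist_lower M x (a : E) t1) hw1)
          have haB2 : a ∈ fmBall M x' (r0/2) (t0/2) := by
            refine hε' ?_
            rw [Metric.mem_ball, Subtype.dist_eq]
            simp only [hx'_def]
            rw [dist_comm]
            exact lt_of_lt_of_le hda (min_le_right _ _)
          simp only [fmBall, Set.mem_setOf_eq] at haB2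
          -- b is in the recentering ball
          have hMab : 1 - r0/2 < M a b (t0/2) := by
            have hmono : M a b t2 ≤ M a b (t0/2) := fm_mono M hM a b h2 (by
              simp only [ht_def] at hsum ⊢; linarith)
            have : r ≤ r0/2 := min_le_left _ _
            linarith
          have hbV : b ∈ V := by
            refine hBV ?_
            simp only [fmBall, Set.mem_setOf_eq]
            have htri := fm_tri M hM x' a b (t := t0/2) (s := t0/2) (by linarith) (by linarith)
            have hsum2 : t0/2 + t0/2 = t0 := by ring
            rw [hsum2] at htri
            linarith
          have hdb : dist (b : E) x < η := by
            simp only [hV_def, Set.mem_setOf_eq, Metric.mem_ball] at hbV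
            exact hbV
          -- y is β-close to b
          have hdy : dist (b : E) y < β :=
            small_ball_aux hβ ht h3 (by linarith) dist_nonneg hr0' hr1' hrβ
              (lt_of_le_of_lt (GdD_dist_lower M (b : E) y t3) hw3)
          refine hball ?_
          rw [Metric.mem_ball]
          have hdxy : dist y x ≤ dist y (b : E) + dist (b : E) x := dist_triangle _ _ _
          have hβη : β ≤ η := min_le_left _ _
          rw [dist_comm] at hdy
          simp only [hη_def] at hβη hdb
          linarith
    · -- the case of a point outside Z
      have hD0 : 0 < Metric.infDist x Z := by
        rw [← hZc.notMem_iff_infDist_pos hZne]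
        exact hx
      set D0 : ℝ := Metric.infDist x Z with hD0_def
      set β : ℝ := min η (D0/2) with hβ_def
      have hβ : 0 < β := lt_min hη (by linarith)
      set r : ℝ := β/(1+β) with hr_def
      have hr0' : 0 < r := by positivity
      have hr1' : r < 1 := by
        rw [hr_def, div_lt_one (by linarith)]; linarith
      have hrβ : r * (1 + β) ≤ β := by
        rw [hr_def, div_mul_cancel₀]
        linarith
      refine ⟨fmBall (fun (x y : E) t => 1 - DD M x y t) x r 1,
        ⟨x, r, 1, hr0', hr1', one_pos, rfl⟩, ?_, ?_⟩
      · rw [hball_eq]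
        simp only [Set.mem_setOf_eq, DD_self M hM hgen x one_pos]
        exact hr0'
      · rw [hball_eq]
        intro y hy
        simp only [Set.mem_setOf_eq] at hy
        rcases min_lt_iff.1 hy with hG | hP
        · have hd := lt_of_le_of_lt (GdD_dist_lower M x y 1) hG
          have : dist x y < β :=
            small_ball_aux hβ one_pos one_pos (le_refl _) dist_nonneg hr0' hr1' hrβ hd
          refine hball ?_
          rw [Metric.mem_ball, dist_comm]
          have hβη : β ≤ η := min_le_left _ _
          simp only [hη_def] at hβη
          linarith
        · exfalso
          obtain ⟨w, hw, hwlt⟩ := exists_lt_of_csInf_lt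
            (pset_nonempty M x y one_pos) (show sInf (pset M x y 1) < r from hP)
          obtain ⟨a, b, t1, t2, t3, h1, h2, h3, hsum, rfl⟩ := hw
          have hg3 : 0 ≤ GdD M (b : E) y t3 := GdD_nonneg M hM _ _ h3
          have hmid0 : 0 ≤ 1 - M a b t2 := by linarith [hM.le_one a b t2 h2]
          have hw1 : GdD M x (a : E) t1 < r := by linarith
          have hda : dist x (a : E) < β :=
            small_ball_aux hβ one_pos h1 (by linarith) dist_nonneg hr0' hr1' hrβ
              (lt_of_le_of_lt (GdD_dist_lower M x (a : E) t1) hw1)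
          have hinf : D0 ≤ dist x (a : E) := Metric.infDist_le_dist_of_mem a.2
          have hβD : β ≤ D0/2 := min_le_right _ _
          linarith
  done

end Aux9
/-- every fuzzy metric (with the Łukasiewicz t-norm) on a nonempty closed
subset of a compact metrizable space extends to a fuzzy metric on the whole space. -/
theorem fuzzyMetric_extension {X : Type*} [TopologicalSpace X] [CompactSpace X]
    [TopologicalSpace.MetrizableSpace X]
    (Y : Set X) (hYc : IsClosed Y) (hYne : Y.Nonempty)
    (M : Y → Y → ℝ → ℝ) (hM : IsFuzzyMetric M luk) (hgen : GeneratesTopology M) :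
    ∃ M' : X → X → ℝ → ℝ, IsFuzzyMetric M' luk ∧ GeneratesTopology M' ∧
      ∀ (y z : Y) (t : ℝ), 0 < t → M' (y : X) (z : X) t = M y z t := by
  letI : MetricSpace X := TopologicalSpace.metrizableSpaceMetric X
  haveI : CompactSpace Y := isCompact_iff_compactSpace.mp hYc.isCompact
  haveI : Nonempty Y := hYne.to_subtype
  refine ⟨fun x y t => 1 - DD M x y t, ?_, Mext_generates M hM hgen hYc hYne, ?_⟩
  · constructor
    · intro x y t ht
      have := DD_lt_one M hM hgen x y ht
      linarith
    · intro x y t ht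
      have := DD_nonneg M hM x y ht
      linarith
    · intro x y t ht
      constructor
      · intro h
        by_contra hxy
        have := DD_pos M hM hgen hYc hxy ht
        linarith
      · intro h
        subst h
        rw [DD_self M hM hgen x ht]
        ring
    · intro x y t ht
      rw [DD_symm M hM]
    · intro x y z t s ht hs
      have htri := DD_triangle M hM x y z ht hs
      have h3 := DD_lt_one M hM hgen x z (by linarith : (0:ℝ) < t + s)
      unfold luk
      apply max_le <;> linarith
    · intro x y
      exact continuousOn_const.sub (DD_contOn_t M hM hgen x y)
  · intro y z t ht
    show 1 - DD M (y : X) (z : X) t = M y z t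
    rw [DD_restrict M hM hgen y z ht]
    ring
end
end
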